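/- arXiv:1703.05014 — 7 statements merged into one kernel-verified Lean document; each statement's English description precedes it below -/
import Mathlib

section
/- Let X be a Hausdorff locally convex space and 𝒮 ⊆ L(X) a subsemigroup. Then: (i) the Köhler semigroup K(𝒮) is closed under composition and is a right topological semigroup; (ii) every element of 𝒮 lies in the topological center of K(𝒮); (iii) K(𝒮) is compact if and only if the orbit 𝒮x is relatively compact in X for every x ∈ X; (iv) if every element of K(𝒮) is a continuous map on X, then K(𝒮) is semitopological; (v) if 𝒮 is abelian, then K(𝒮) is semitopological if and only if K(𝒮) is abelian. -/
set_option linter.unusedSectionVars false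


open Filter Topology Set

namespace Stmt8

variable {X : Type*} [AddCommGroup X] [Module ℂ X] [TopologicalSpace X]
  [IsTopologicalAddGroup X] [ContinuousSMul ℂ X] [T2Space X] [LocallyConvexSpace ℝ X]

/-- The underlying functions of a set of continuous linear operators. -/
def carrier (S : Set (X →L[ℂ] X)) : Set (X → X) :=
  (fun T : X →L[ℂ] X => (T : X → X)) '' S

/-- The Köhler semigroup `K(𝒮)`: the closure of `𝒮` in `X → X` with the
topology of pointwise convergence. -/
noncomputable def Kohler (S : Set (X →L[ℂ] X)) : Set (X → X) :=
  closure (carrier S)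

lemma cont_rcomp (g : X → X) : Continuous (fun f : X → X => f ∘ g) :=
  continuous_pi fun x => continuous_apply (g x)

lemma cont_lcomp {T : X → X} (hT : Continuous T) :
    Continuous (fun g : X → X => T ∘ g) :=
  continuous_pi fun x => hT.comp (continuous_apply x)

lemma lcomp_mem (S : Set (X →L[ℂ] X)) (hsemi : ∀ a ∈ S, ∀ b ∈ S, a ∘L b ∈ S)
    {T : X →L[ℂ] X} (hT : T ∈ S) {g : X → X} (hg : g ∈ Kohler S) :
    (T : X → X) ∘ g ∈ Kohler S := by
  refine map_mem_closure (cont_lcomp T.continuous) hg ?_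
  rintro _ ⟨t, ht, rfl⟩
  exact ⟨T ∘L t, hsemi T hT t ht, rfl⟩

lemma comp_mem (S : Set (X →L[ℂ] X)) (hsemi : ∀ a ∈ S, ∀ b ∈ S, a ∘L b ∈ S)
    {f g : X → X} (hf : f ∈ Kohler S) (hg : g ∈ Kohler S) :
    f ∘ g ∈ Kohler S := by
  have h := map_mem_closure (cont_rcomp g) hf (t := Kohler S) ?_
  · simpa [Kohler, closure_closure] using h
  · rintro _ ⟨T, hT, rfl⟩
    exact lcomp_mem S hsemi hT hg

lemma comm_of_mem (S : Set (X →L[ℂ] X)) (habel : ∀ a ∈ S, ∀ b ∈ S, a ∘L b = b ∘L a)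
    {T : X →L[ℂ] X} (hT : T ∈ S) {g : X → X} (hg : g ∈ Kohler S) :
    (T : X → X) ∘ g = g ∘ T := by
  have hcl : IsClosed {g : X → X | (T : X → X) ∘ g = g ∘ T} :=
    isClosed_eq (cont_lcomp T.continuous) (cont_rcomp (T : X → X))
  have : carrier S ⊆ {g : X → X | (T : X → X) ∘ g = g ∘ T} := by
    rintro _ ⟨t, ht, rfl⟩
    have := habel T hT t ht
    calc (T : X → X) ∘ t = ((T ∘L t : X →L[ℂ] X) : X → X) := rfl
      _ = ((t ∘L T : X →L[ℂ] X) : X → X) := by rw [this]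
      _ = (t : X → X) ∘ T := rfl
  exact hcl.closure_subset_iff.mpr this hg


/-- Basic properties of the Köhler semigroup of an operator
semigroup `𝒮` on a Hausdorff locally convex space `X`:
(i) `K(𝒮)` is closed under composition and right topological (for every fixed
`g ∈ K(𝒮)` the map `f ↦ f ∘ g` is continuous on `K(𝒮)`);
(ii) every element of `𝒮` lies in the topological center (for `s ∈ 𝒮` the map
`g ↦ s ∘ g` is continuous on `K(𝒮)`);
(iii) `K(𝒮)` is compact iff every orbit `𝒮x` is relatively compact;
(iv) if all elements of `K(𝒮)` are continuous, then `K(𝒮)` is semitopological;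
(v) if `𝒮` is abelian, then `K(𝒮)` is semitopological iff it is abelian. -/
theorem kohler_basic_properties (S : Set (X →L[ℂ] X))
    (hsemi : ∀ a ∈ S, ∀ b ∈ S, a ∘L b ∈ S) :
    -- (i)
    ((∀ f ∈ Kohler S, ∀ g ∈ Kohler S, f ∘ g ∈ Kohler S) ∧
      ∀ g ∈ Kohler S, ContinuousOn (fun f : X → X => f ∘ g) (Kohler S)) ∧
    -- (ii)
    (∀ T ∈ S, ContinuousOn (fun g : X → X => (T : X → X) ∘ g) (Kohler S)) ∧
    -- (iii)
    (IsCompact (Kohler S) ↔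
      ∀ x : X, IsCompact (closure ((fun T : X →L[ℂ] X => T x) '' S))) ∧
    -- (iv)
    ((∀ f ∈ Kohler S, Continuous f) →
      ∀ f ∈ Kohler S, ContinuousOn (fun g : X → X => f ∘ g) (Kohler S)) ∧
    -- (v)
    ((∀ a ∈ S, ∀ b ∈ S, a ∘L b = b ∘L a) →
      ((∀ f ∈ Kohler S, ContinuousOn (fun g : X → X => f ∘ g) (Kohler S)) ↔
        ∀ f ∈ Kohler S, ∀ g ∈ Kohler S, f ∘ g = g ∘ f)) := by
  refine ⟨⟨fun f hf g hg => comp_mem S hsemi hf hg,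
      fun g _ => (cont_rcomp g).continuousOn⟩,
    fun T _ => (cont_lcomp T.continuous).continuousOn, ?_, ?_, ?_⟩
  · -- (iii)
    constructor
    · intro hK x
      have horb : (fun T : X →L[ℂ] X => T x) '' S = (fun f : X → X => f x) '' carrier S := by
        rw [carrier, image_image]
      have himg : IsCompact ((fun f : X → X => f x) '' Kohler S) :=
        hK.image (continuous_apply x)
      have hsub : (fun T : X →L[ℂ] X => T x) '' S ⊆ (fun f : X → X => f x) '' Kohler S := by
        rw [horb]; exact image_mono subset_closure
      exact himg.of_isClosed_subset isClosed_closure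
        (himg.isClosed.closure_subset_iff.mpr hsub)
    · intro horb
      have hsub : Kohler S ⊆ Set.pi univ
          (fun x => closure ((fun T : X →L[ℂ] X => T x) '' S)) := by
        refine closure_minimal ?_ (isClosed_set_pi fun x _ => isClosed_closure)
        rintro _ ⟨T, hT, rfl⟩ x _
        exact subset_closure ⟨T, hT, rfl⟩
      exact (isCompact_univ_pi horb).of_isClosed_subset isClosed_closure hsub
  · -- (iv)
    intro hc f hf
    exact (cont_lcomp (hc f hf)).continuousOn
  · -- (v)
    intro habel
    constructor
    · intro hcont f hf g hg
      have hF : (𝓝[carrier S] f).NeBot := mem_closure_iff_nhdsWithin_neBot.mp hf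
      have h1 : Tendsto (fun s : X → X => g ∘ s) (𝓝[carrier S] f) (𝓝 (g ∘ f)) :=
        ((hcont g hg f hf).mono subset_closure)
      have h2 : Tendsto (fun s : X → X => s ∘ g) (𝓝[carrier S] f) (𝓝 (f ∘ g)) :=
        ((cont_rcomp g).tendsto f).mono_left nhdsWithin_le_nhds
      have h3 : ∀ᶠ s in 𝓝[carrier S] f, s ∘ g = g ∘ s := by
        filter_upwards [eventually_mem_nhdsWithin] with s hs
        obtain ⟨T, hT, rfl⟩ := hs
        exact comm_of_mem S habel hT hg
      exact tendsto_nhds_unique (h2.congr' (h3.mono fun s h => h)) h1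
    · intro hcomm f hf
      refine ((cont_rcomp f).continuousOn).congr fun g hg => ?_
      exact (hcomm f hf g hg)


end Stmt8
end

section
/- Let X be a barrelled locally convex space in which every von Neumann bounded subset is relatively compact (i.e., X is a Montel space), and let 𝒮 ⊆ L(X) be a pointwise bounded subsemigroup (each orbit 𝒮x is von Neumann bounded). Then the Köhler semigroup K(𝒮) is a compact semitopological semigroup consisting of continuous linear operators on X. -/
open Filter Topology Set

namespace Stmt10

variable {X : Type*} [AddCommGroup X] [Module ℂ X] [TopologicalSpace X]
  [IsTopologicalAddGroup X] [ContinuousSMul ℂ X] [T2Space X] [LocallyConvexSpace ℝ X]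
  [BarrelledSpace ℂ X]

/-- The underlying functions of a set of continuous linear operators. -/
def carrier (S : Set (X →L[ℂ] X)) : Set (X → X) :=
  (fun T : X →L[ℂ] X => (T : X → X)) '' S

/-- The Köhler semigroup `K(𝒮)`: the closure of `𝒮` in `X → X` with the
topology of pointwise convergence. -/
noncomputable def Kohler (S : Set (X →L[ℂ] X)) : Set (X → X) :=
  closure (carrier S)

/-- If `X` is a Montel space (barrelled, and every von
Neumann bounded set is relatively compact) and `𝒮 ⊆ L(X)` is a pointwise
bounded subsemigroup, then `K(𝒮)` is a compact semitopological semigroup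
consisting of continuous linear operators. -/
theorem montel_kohler_compact_semitopological
    (hMontel : ∀ B : Set X, Bornology.IsVonNBounded ℂ B → IsCompact (closure B))
    (S : Set (X →L[ℂ] X))
    (hsemi : ∀ a ∈ S, ∀ b ∈ S, a ∘L b ∈ S)
    (hbdd : ∀ x : X, Bornology.IsVonNBounded ℂ ((fun T : X →L[ℂ] X => T x) '' S)) :
    IsCompact (Kohler S) ∧
    (∀ f ∈ Kohler S, Continuous f ∧ IsLinearMap ℂ f) ∧
    (∀ f ∈ Kohler S, ∀ g ∈ Kohler S, f ∘ g ∈ Kohler S) ∧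
    (∀ g ∈ Kohler S, ContinuousOn (fun f : X → X => f ∘ g) (Kohler S)) ∧
    (∀ f ∈ Kohler S, ContinuousOn (fun g : X → X => f ∘ g) (Kohler S)) := by
  letI : UniformSpace X := IsTopologicalAddGroup.rightUniformSpace X
  haveI : IsUniformAddGroup X := isUniformAddGroup_of_addCommGroup
  haveI : ContinuousSMul ℝ X := by
    refine ⟨?_⟩
    have : (fun p : ℝ × X => p.1 • p.2) = fun p : ℝ × X => (p.1 • (1 : ℂ)) • p.2 := by
      ext p; rw [smul_one_smul]
    rw [this]
    exact (continuous_fst.smul continuous_const).smul continuous_snd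
  open scoped ComplexOrder in
  haveI : LocallyConvexSpace ℂ X := by
    exact (locallyConvexSpace_iff_zero (𝕜 := ℂ) (E := X)).mpr (by
      simpa only [convex_RCLike_iff_convex_real] using
        (locallyConvexSpace_iff_zero (𝕜 := ℝ) (E := X)).mp inferInstance)
  -- the gauge seminorm family generating the topology of `X`
  have hq : WithSeminorms (gaugeSeminormFamily ℂ X) := with_gaugeSeminormFamily
  -- Banach–Steinhaus: `S` is (uniformly) equicontinuous
  have hBS : UniformEquicontinuous
      ((↑) ∘ fun s : S => (s : X →L[ℂ] X)) := by
    refine hq.banach_steinhaus ?_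
    intro k x
    rcases (hq.isVonNBounded_iff_seminorm_bounded.mp (hbdd x)) k with ⟨r, -, hr⟩
    refine ⟨r, ?_⟩
    rintro y ⟨s, rfl⟩
    exact (hr _ ⟨s.1, s.2, rfl⟩).le
  have hequiS : Set.Equicontinuous (carrier S) := by
    have h := equicontinuous_iff_range.mp hBS.equicontinuous
    have hrange : range ((↑) ∘ fun s : S => (s : X →L[ℂ] X)) = carrier S := by
      rw [carrier, Set.image_eq_range]; rfl
    rwa [hrange] at h
  have hequiK : (Kohler S).Equicontinuous := hequiS.closure
  -- continuity of elements of `K(S)`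
  have hcont : ∀ f ∈ Kohler S, Continuous f := fun f hf =>
    hequiK.continuous_of_mem hf
  -- linearity of elements of `K(S)`
  have hlin : ∀ f ∈ Kohler S, IsLinearMap ℂ f := by
    intro f hf
    constructor
    · intro x y
      have h : Kohler S ⊆ {f : X → X | f (x + y) = f x + f y} := by
        refine closure_minimal ?_
          (isClosed_eq (continuous_apply _) ((continuous_apply x).add (continuous_apply y)))
        rintro _ ⟨T, hT, rfl⟩
        simp [map_add]
      exact h hf
    · intro c x
      have h : Kohler S ⊆ {f : X → X | f (c • x) = c • f x} := by
        refine closure_minimal ?_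
          (isClosed_eq (continuous_apply _) ((continuous_apply x).const_smul c))
        rintro _ ⟨T, hT, rfl⟩
        simp [map_smul]
      exact h hf
  -- compactness
  have hcompact : IsCompact (Kohler S) := by
    have hpiC : IsCompact (Set.pi univ fun x : X =>
        closure ((fun T : X →L[ℂ] X => T x) '' S)) :=
      isCompact_univ_pi fun x => hMontel _ (hbdd x)
    have hsub : carrier S ⊆ Set.pi univ fun x : X =>
        closure ((fun T : X →L[ℂ] X => T x) '' S) := by
      rintro _ ⟨T, hT, rfl⟩ x -
      exact subset_closure ⟨T, hT, rfl⟩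
    refine hpiC.of_isClosed_subset isClosed_closure
      (closure_minimal hsub (isClosed_set_pi fun x _ => isClosed_closure))
  -- `S ∘ K(S) ⊆ K(S)`
  have hS_K : ∀ T ∈ S, ∀ g ∈ Kohler S, ((T : X → X) ∘ g) ∈ Kohler S := by
    intro T hT g hg
    have hmap : Continuous (fun g : X → X => (T : X → X) ∘ g) :=
      continuous_pi fun x => T.continuous.comp (continuous_apply x)
    have himg : (fun g : X → X => (T : X → X) ∘ g) '' carrier S ⊆ carrier S := by
      rintro _ ⟨_, ⟨U, hU, rfl⟩, rfl⟩
      exact ⟨T ∘L U, hsemi T hT U hU, rfl⟩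
    have hmem : (T : X → X) ∘ g ∈
        closure ((fun g : X → X => (T : X → X) ∘ g) '' carrier S) :=
      image_closure_subset_closure_image hmap (mem_image_of_mem _ hg)
    exact closure_mono himg hmem
  -- multiplication is internal
  have hmul : ∀ f ∈ Kohler S, ∀ g ∈ Kohler S, f ∘ g ∈ Kohler S := by
    intro f hf g hg
    have hmap : Continuous (fun f : X → X => f ∘ g) :=
      continuous_pi fun x => continuous_apply (g x)
    have himg : (fun f : X → X => f ∘ g) '' carrier S ⊆ Kohler S := by
      rintro _ ⟨_, ⟨T, hT, rfl⟩, rfl⟩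
      exact hS_K T hT g hg
    have hmem : f ∘ g ∈ closure ((fun f : X → X => f ∘ g) '' carrier S) :=
      image_closure_subset_closure_image hmap (mem_image_of_mem _ hf)
    have := closure_mono himg hmem
    exact (isClosed_closure (s := carrier S)).closure_subset this
  refine ⟨hcompact, fun f hf => ⟨hcont f hf, hlin f hf⟩, hmul, ?_, ?_⟩
  · intro g hg
    exact (continuous_pi fun x => continuous_apply (g x)).continuousOn
  · intro f hf
    exact (continuous_pi fun x => (hcont f hf).comp (continuous_apply x)).continuousOn

end Stmt10
end

section
/- Let X₁ be a Hausdorff locally convex space, X₂ ⊆ X₁ a linear subspace equipped with the subspace topology, and 𝒮₁ ⊆ L(X₁) a subsemigroup leaving X₂ invariant; set 𝒮₂ = {S|_{X₂} : S ∈ 𝒮₁} ⊆ L(X₂). If the Köhler semigroups K(𝒮₁) and K(𝒮₂) are compact, then every R ∈ K(𝒮₁) maps X₂ into X₂, the restriction R|_{X₂} belongs to K(𝒮₂), and the map K(𝒮₁) → K(𝒮₂), R ↦ R|_{X₂}, is a continuous surjective multiplicative map (an epimorphism of right topological semigroups). -/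
open Filter Topology Set
open scoped Classical

namespace Stmt11

variable {X : Type*} [AddCommGroup X] [Module ℂ X] [TopologicalSpace X]
  [IsTopologicalAddGroup X] [ContinuousSMul ℂ X] [T2Space X] [LocallyConvexSpace ℝ X]

/-- The underlying functions of a set of continuous linear operators. -/
def carrier (X : Type*) [AddCommGroup X] [Module ℂ X] [TopologicalSpace X]
    (S : Set (X →L[ℂ] X)) : Set (X → X) :=
  (fun T : X →L[ℂ] X => (T : X → X)) '' S

/-- The Köhler semigroup `K(𝒮)`: the closure of `𝒮` in `X → X` with the
topology of pointwise convergence. -/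
noncomputable def Kohler (X : Type*) [AddCommGroup X] [Module ℂ X] [TopologicalSpace X]
    (S : Set (X →L[ℂ] X)) : Set (X → X) :=
  closure (carrier X S)

/-- Restriction of a map `R : X → X` to a subspace `p` (defined to be the
identity in the irrelevant case where `p` is not invariant under `R`). -/
noncomputable def resMap (p : Submodule ℂ X) (R : X → X) : p → p :=
  fun x => if h : R (x : X) ∈ p then (⟨R (x : X), h⟩ : p) else x

/-- Let `X₂ = p` be a subspace of `X₁ = X` (with the subspace
topology), `𝒮₁` a subsemigroup of `L(X₁)` leaving `p` invariant, and `𝒮₂` the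
semigroup of the restrictions. If `K(𝒮₁)` and `K(𝒮₂)` are compact, then every
`R ∈ K(𝒮₁)` leaves `p` invariant, its restriction lies in `K(𝒮₂)`, and
`R ↦ R|_p` is a continuous surjective multiplicative map `K(𝒮₁) → K(𝒮₂)`. -/
theorem restriction_epimorphism (p : Submodule ℂ X)
    (S₁ : Set (X →L[ℂ] X)) (S₂ : Set (p →L[ℂ] p))
    (hsemi₁ : ∀ a ∈ S₁, ∀ b ∈ S₁, a ∘L b ∈ S₁)
    (hinv : ∀ T ∈ S₁, ∀ x : X, x ∈ p → T x ∈ p)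
    (hres : ∀ T' : p →L[ℂ] p, T' ∈ S₂ ↔ ∃ T ∈ S₁, ∀ x : p, (T' x : X) = T (x : X))
    (hK₁ : IsCompact (Kohler X S₁)) (hK₂ : IsCompact (Kohler p S₂)) :
    (∀ R ∈ Kohler X S₁, ∀ x : X, x ∈ p → R x ∈ p) ∧
    (∀ R ∈ Kohler X S₁, resMap p R ∈ Kohler p S₂) ∧
    (∀ g ∈ Kohler p S₂, ∃ R ∈ Kohler X S₁, resMap p R = g) ∧
    ContinuousOn (resMap p) (Kohler X S₁) ∧
    (∀ R ∈ Kohler X S₁, ∀ R' ∈ Kohler X S₁,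
      resMap p (R ∘ R') = resMap p R ∘ resMap p R') := by
  classical
  -- the "formal restriction" map on arbitrary functions
  set ρ : (X → X) → (p → p) := fun T x =>
    if h : T (x : X) ∈ p then (⟨T (x : X), h⟩ : p) else x with hρ
  have hρres : ρ = resMap p := rfl
  -- elements of carrier X S₁ restrict into carrier p S₂
  have hcar : ∀ T ∈ carrier X S₁, ρ T ∈ carrier p S₂ ∧ ∀ x : p, T (x : X) = ((ρ T x : p) : X) := by
    rintro _ ⟨T, hT, rfl⟩
    have hinvT : ∀ x : p, T (x : X) ∈ p := fun x => hinv T hT x.1 x.2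
    set T' : p →L[ℂ] p := (T.comp p.subtypeL).codRestrict p (fun x => hinvT x) with hT'def
    have hT' : T' ∈ S₂ := (hres T').2 ⟨T, hT, fun x => rfl⟩
    have heq : ρ (⇑T) = ⇑T' := by
      funext x
      simp only [hρ]
      rw [dif_pos (hinvT x)]
      exact Subtype.ext rfl
    constructor
    · exact heq ▸ ⟨T', hT', rfl⟩
    · intro x
      simp only [hρ]
      rw [dif_pos (hinvT x)]
  -- Key step A: every R in K(S₁) restricts to an element of K(S₂)
  have keyA : ∀ R ∈ Kohler X S₁, ∃ g ∈ Kohler p S₂, ∀ x : p, R (x : X) = ((g x : p) : X) := by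
    intro R hR
    obtain ⟨F, hFmem, hFle⟩ := mem_closure_iff_ultrafilter.1 hR
    have hmemG : Kohler p S₂ ∈ Filter.map ρ (F : Filter (X → X)) :=
      Filter.mem_map.2 (Filter.mem_of_superset hFmem fun T hT => subset_closure (hcar T hT).1)
    obtain ⟨g, hg, hGg⟩ := hK₂.ultrafilter_le_nhds (F.map ρ)
      (le_principal_iff.2 (by simpa using hmemG))
    refine ⟨g, hg, fun x => ?_⟩
    have h1 : Filter.Tendsto (fun T : X → X => ((ρ T x : p) : X)) F (𝓝 ((g x : p) : X)) := by
      have : Filter.Tendsto (fun f : p → p => ((f x : p) : X)) (𝓝 g) (𝓝 ((g x : p) : X)) :=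
        (continuous_subtype_val.comp (continuous_apply x)).tendsto g
      exact this.comp hGg
    have h2 : Filter.Tendsto (fun T : X → X => T (x : X)) F (𝓝 ((g x : p) : X)) := by
      refine h1.congr' ?_
      filter_upwards [hFmem] with T hT
      exact ((hcar T hT).2 x).symm
    have h3 : Filter.Tendsto (fun T : X → X => T (x : X)) F (𝓝 (R (x : X))) :=
      ((continuous_apply (x : X)).tendsto R).comp hFle
    exact tendsto_nhds_unique h3 h2
  -- Part 1: invariance
  have part1 : ∀ R ∈ Kohler X S₁, ∀ x : X, x ∈ p → R x ∈ p := by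
    intro R hR x hx
    obtain ⟨g, _, hgR⟩ := keyA R hR
    rw [hgR ⟨x, hx⟩]
    exact (g ⟨x, hx⟩).2
  -- Part 2
  have part2 : ∀ R ∈ Kohler X S₁, resMap p R ∈ Kohler p S₂ := by
    intro R hR
    obtain ⟨g, hg, hgR⟩ := keyA R hR
    have : resMap p R = g := by
      funext x
      have hmem : R (x : X) ∈ p := part1 R hR x.1 x.2
      simp only [resMap]
      rw [dif_pos hmem]
      exact Subtype.ext (hgR x)
    rw [this]; exact hg
  refine ⟨part1, part2, ?_, ?_, ?_⟩
  -- Part 3: surjectivity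
  · intro g hg
    obtain ⟨G, hGmem, hGle⟩ := mem_closure_iff_ultrafilter.1 hg
    set σ : (p → p) → (X → X) := fun f =>
      if h : ∃ T : X →L[ℂ] X, T ∈ S₁ ∧ ∀ x : p, ((f x : p) : X) = T (x : X)
      then (h.choose : X → X) else id with hσ
    have hσcar : ∀ f ∈ carrier p S₂,
        σ f ∈ carrier X S₁ ∧ ∀ x : p, ((f x : p) : X) = σ f (x : X) := by
      rintro _ ⟨T', hT', rfl⟩
      obtain ⟨T, hT, hTT'⟩ := (hres T').1 hT'
      have hex : ∃ T : X →L[ℂ] X, T ∈ S₁ ∧ ∀ x : p, ((T' x : p) : X) = T (x : X) :=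
        ⟨T, hT, hTT'⟩
      constructor
      · simp only [hσ, dif_pos hex]
        exact ⟨hex.choose, hex.choose_spec.1, rfl⟩
      · intro x
        simp only [hσ, dif_pos hex]
        exact hex.choose_spec.2 x
    have hmemF : Kohler X S₁ ∈ Filter.map σ (G : Filter (p → p)) :=
      Filter.mem_map.2 (Filter.mem_of_superset hGmem fun f hf => subset_closure (hσcar f hf).1)
    obtain ⟨R, hR, hFR⟩ := hK₁.ultrafilter_le_nhds (G.map σ)
      (le_principal_iff.2 (by simpa using hmemF))
    refine ⟨R, hR, ?_⟩
    have hval : ∀ x : p, R (x : X) = ((g x : p) : X) := by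
      intro x
      have h1 : Filter.Tendsto (fun f : p → p => σ f (x : X)) G (𝓝 (R (x : X))) :=
        ((continuous_apply (x : X)).tendsto R).comp hFR
      have h2 : Filter.Tendsto (fun f : p → p => ((f x : p) : X)) G (𝓝 (R (x : X))) := by
        refine h1.congr' ?_
        filter_upwards [hGmem] with f hf
        exact ((hσcar f hf).2 x).symm
      have h3 : Filter.Tendsto (fun f : p → p => ((f x : p) : X)) G (𝓝 ((g x : p) : X)) :=
        ((continuous_subtype_val.comp (continuous_apply x)).tendsto g).mono_left hGle
      exact tendsto_nhds_unique h2 h3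
    funext x
    have hmem : R (x : X) ∈ p := by rw [hval x]; exact (g x).2
    simp only [resMap]
    rw [dif_pos hmem]
    exact Subtype.ext (hval x)
  -- Part 4: continuity
  · rw [← hρres]
    refine continuousOn_pi.2 fun x => ?_
    have hemb : IsInducing ((↑) : p → X) := IsInducing.subtypeVal
    rw [hemb.continuousOn_iff]
    have : ContinuousOn (fun R : X → X => R (x : X)) (Kohler X S₁) :=
      (continuous_apply (x : X)).continuousOn
    refine this.congr fun R hR => ?_
    show ((ρ R x : p) : X) = R (x : X)
    have hmem : R (x : X) ∈ p := part1 R hR x.1 x.2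
    simp only [hρ]
    rw [dif_pos hmem]
  -- Part 5: multiplicativity
  · intro R hR R' hR'
    funext x
    have h1 : R' (x : X) ∈ p := part1 R' hR' x.1 x.2
    have h2 : R (R' (x : X)) ∈ p := part1 R hR _ h1
    show resMap p (R ∘ R') x = resMap p R (resMap p R' x)
    have e1 : resMap p R' x = ⟨R' (x : X), h1⟩ := dif_pos h1
    have e2 : resMap p R (⟨R' (x : X), h1⟩ : p) = ⟨R (R' (x : X)), h2⟩ := dif_pos h2
    have e3 : resMap p (R ∘ R') x = ⟨R (R' (x : X)), h2⟩ := dif_pos h2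
    rw [e1, e2, e3]

end Stmt11
end

section
/- Let X₁, X₂ be Hausdorff locally convex spaces, 𝒮₁ ⊆ L(X₁) and 𝒮₂ ⊆ L(X₂) subsemigroups, Φ ∈ L(X₁,X₂) a surjective continuous linear map, and Ψ : 𝒮₁ → 𝒮₂ a surjective semigroup homomorphism with Φ(Sx) = Ψ(S)(Φ(x)) for all S ∈ 𝒮₁ and x ∈ X₁. If K(𝒮₁) is compact, then there is a well-defined map Ψ̂ : K(𝒮₁) → K(𝒮₂) determined by Ψ̂(S)(Φ(x)) = Φ(Sx) for all S ∈ K(𝒮₁) and x ∈ X₁, and Ψ̂ is a continuous surjective multiplicative map (an epimorphism of right topological semigroups) with Ψ̂|_{𝒮₁} = Ψ. -/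
open Filter Topology Set

namespace Stmt12

/-- The underlying functions of a set of continuous linear operators. -/
def carrier (X : Type*) [AddCommGroup X] [Module ℂ X] [TopologicalSpace X]
    (S : Set (X →L[ℂ] X)) : Set (X → X) :=
  (fun T : X →L[ℂ] X => (T : X → X)) '' S

/-- The Köhler semigroup `K(𝒮)`: the closure of `𝒮` in `X → X` with the
topology of pointwise convergence. -/
noncomputable def Kohler (X : Type*) [AddCommGroup X] [Module ℂ X] [TopologicalSpace X]
    (S : Set (X →L[ℂ] X)) : Set (X → X) :=
  closure (carrier X S)

variable {X₁ : Type*} [AddCommGroup X₁] [Module ℂ X₁] [TopologicalSpace X₁]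
  [IsTopologicalAddGroup X₁] [ContinuousSMul ℂ X₁] [T2Space X₁] [LocallyConvexSpace ℝ X₁]
variable {X₂ : Type*} [AddCommGroup X₂] [Module ℂ X₂] [TopologicalSpace X₂]
  [IsTopologicalAddGroup X₂] [ContinuousSMul ℂ X₂] [T2Space X₂] [LocallyConvexSpace ℝ X₂]

/-- Given a surjective continuous linear map `Φ : X₁ → X₂`
and a surjective semigroup homomorphism `Ψ : 𝒮₁ → 𝒮₂` intertwined by `Φ`, if
`K(𝒮₁)` is compact then `Ψ` extends to a continuous surjective multiplicative
map `Ψ̂ : K(𝒮₁) → K(𝒮₂)` determined by `Ψ̂(S)(Φ x) = Φ (S x)`. -/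
theorem factor_epimorphism
    (S₁ : Set (X₁ →L[ℂ] X₁)) (S₂ : Set (X₂ →L[ℂ] X₂))
    (hsemi₁ : ∀ a ∈ S₁, ∀ b ∈ S₁, a ∘L b ∈ S₁)
    (hsemi₂ : ∀ a ∈ S₂, ∀ b ∈ S₂, a ∘L b ∈ S₂)
    (Φ : X₁ →L[ℂ] X₂) (hΦ : Function.Surjective Φ)
    (Ψ : (X₁ →L[ℂ] X₁) → (X₂ →L[ℂ] X₂))
    (hΨmem : ∀ T ∈ S₁, Ψ T ∈ S₂)
    (hΨsurj : ∀ T₂ ∈ S₂, ∃ T₁ ∈ S₁, Ψ T₁ = T₂)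
    (hΨmul : ∀ a ∈ S₁, ∀ b ∈ S₁, Ψ (a ∘L b) = Ψ a ∘L Ψ b)
    (hΨint : ∀ T ∈ S₁, ∀ x : X₁, Φ (T x) = Ψ T (Φ x))
    (hK₁ : IsCompact (Kohler X₁ S₁)) :
    ∃ F : (X₁ → X₁) → (X₂ → X₂),
      (∀ R ∈ Kohler X₁ S₁, ∀ x : X₁, F R (Φ x) = Φ (R x)) ∧
      (∀ R ∈ Kohler X₁ S₁, F R ∈ Kohler X₂ S₂) ∧
      (∀ g ∈ Kohler X₂ S₂, ∃ R ∈ Kohler X₁ S₁, F R = g) ∧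
      ContinuousOn F (Kohler X₁ S₁) ∧
      (∀ R ∈ Kohler X₁ S₁, ∀ R' ∈ Kohler X₁ S₁, F (R ∘ R') = F R ∘ F R') ∧
      (∀ T ∈ S₁, F (T : X₁ → X₁) = (Ψ T : X₂ → X₂)) := by
  classical
  set σ : X₂ → X₁ := Function.surjInv hΦ with hσdef
  have hσ : ∀ y, Φ (σ y) = y := Function.surjInv_eq hΦ
  -- well-definedness: Φ (R x) depends only on Φ x, for R in the Köhler semigroup
  have key : ∀ x x' : X₁, Φ x = Φ x' → ∀ R ∈ Kohler X₁ S₁, Φ (R x) = Φ (R x') := by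
    intro x x' hxx'
    have hcl : IsClosed {f : X₁ → X₁ | Φ (f x) = Φ (f x')} :=
      isClosed_eq (Φ.continuous.comp (continuous_apply x))
        (Φ.continuous.comp (continuous_apply x'))
    have hsub : carrier X₁ S₁ ⊆ {f : X₁ → X₁ | Φ (f x) = Φ (f x')} := by
      rintro _ ⟨T, hT, rfl⟩
      simp only [Set.mem_setOf_eq]
      rw [hΨint T hT x, hΨint T hT x', hxx']
    intro R hR
    exact closure_minimal hsub hcl hR
  -- the factor map
  set F : (X₁ → X₁) → (X₂ → X₂) := fun R y => Φ (R (σ y)) with hFdef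
  have Fcont : Continuous F :=
    continuous_pi fun y => Φ.continuous.comp (continuous_apply (σ y))
  -- property (1)
  have h1 : ∀ R ∈ Kohler X₁ S₁, ∀ x : X₁, F R (Φ x) = Φ (R x) := by
    intro R hR x
    exact key (σ (Φ x)) x (hσ (Φ x)) R hR
  -- property (6)
  have h6 : ∀ T ∈ S₁, F (T : X₁ → X₁) = (Ψ T : X₂ → X₂) := by
    intro T hT
    funext y
    show Φ (T (σ y)) = Ψ T y
    rw [hΨint T hT (σ y), hσ y]
  -- F maps the carrier of S₁ into the carrier of S₂
  have hcar : F '' carrier X₁ S₁ ⊆ carrier X₂ S₂ := by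
    rintro _ ⟨_, ⟨T, hT, rfl⟩, rfl⟩
    exact ⟨Ψ T, hΨmem T hT, (h6 T hT).symm⟩
  -- in fact F maps the carrier of S₁ onto the carrier of S₂
  have hcar' : carrier X₂ S₂ ⊆ F '' carrier X₁ S₁ := by
    rintro _ ⟨T₂, hT₂, rfl⟩
    obtain ⟨T₁, hT₁, hΨ₁⟩ := hΨsurj T₂ hT₂
    exact ⟨(T₁ : X₁ → X₁), ⟨T₁, hT₁, rfl⟩, by rw [h6 T₁ hT₁, hΨ₁]⟩
  -- property (2)
  have h2 : ∀ R ∈ Kohler X₁ S₁, F R ∈ Kohler X₂ S₂ := by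
    intro R hR
    have := image_closure_subset_closure_image (f := F) Fcont
      (s := carrier X₁ S₁) ⟨R, hR, rfl⟩
    exact closure_mono hcar this
  -- property (3): surjectivity, using compactness
  have h3 : ∀ g ∈ Kohler X₂ S₂, ∃ R ∈ Kohler X₁ S₁, F R = g := by
    have himg : IsCompact (F '' Kohler X₁ S₁) := hK₁.image Fcont
    have hclosed : IsClosed (F '' Kohler X₁ S₁) := himg.isClosed
    have hsub : carrier X₂ S₂ ⊆ F '' Kohler X₁ S₁ := by
      refine hcar'.trans (Set.image_mono ?_)
      exact subset_closure
    intro g hg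
    have := closure_minimal hsub hclosed hg
    obtain ⟨R, hR, hFR⟩ := this
    exact ⟨R, hR, hFR⟩
  -- property (5): multiplicativity
  have h5 : ∀ R ∈ Kohler X₁ S₁, ∀ R' ∈ Kohler X₁ S₁, F (R ∘ R') = F R ∘ F R' := by
    intro R hR R' hR'
    funext y
    show Φ (R (R' (σ y))) = F R (Φ (R' (σ y)))
    rw [h1 R hR (R' (σ y))]
  exact ⟨F, h1, h2, h3, Fcont.continuousOn, h5, h6⟩

end Stmt12
end

section
/- Let (K;S) be a topological dynamical system. For every s ∈ S and every a ∈ ℓ¹(K) there is an element T_s'a ∈ ℓ¹(K), given by (T_s'a)(x) = ∑_{y ∈ K, sy = x} a(y), satisfying ⟨f, T_s'a⟩ = ∑_{x∈K} a(x) f(sx) for all f ∈ C(K); moreover, for every a ∈ ℓ¹(K) the orbit {T_s'a : s ∈ S} is relatively compact in ℓ¹(K) with respect to the topology σ(ℓ¹(K), C(K)). -/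
open Filter Topology Set

namespace Stmt13

variable {K : Type*} [TopologicalSpace K] [CompactSpace K] [T2Space K]
variable {S : Type*} [Semigroup S] [TopologicalSpace S] [SMul S K]
  [IsScalarTower S S K] [ContinuousSMul S K]

/-- `ℓ¹(K)`: the absolutely summable families on `K`. -/
abbrev L1 (K : Type*) : Type _ := {a : K → ℂ // Summable fun x => ‖a x‖}

/-- The topology `σ(ℓ¹(K), C(K))` on `ℓ¹(K)`, induced by the pairings
`a ↦ ∑_{x ∈ K} a x * f x` with `f ∈ C(K)`. -/
noncomputable def ell1WeakTop (K : Type*) [TopologicalSpace K] :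
    TopologicalSpace (L1 K) :=
  TopologicalSpace.induced
    (fun a (f : C(K, ℂ)) => ∑' x : K, (a : K → ℂ) x * f x) inferInstance

/-- The fibre sum `(T_s' a)(x) = ∑_{y : s y = x} a y`. -/
noncomputable def adjAt (s : S) (a : K → ℂ) : K → ℂ :=
  fun x => ∑' y : {y : K // s • y = x}, a (y : K)

/-! ### Auxiliary definitions and lemmas -/

/-- The fibre sum for an arbitrary self-map `g` of `K`. -/
noncomputable def adjF (g : K → K) (a : K → ℂ) : K → ℂ :=
  fun x => ∑' y : {y : K // g y = x}, a (y : K)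

/-- `K` is the disjoint union of the fibres of `g`. -/
def sigmaEquiv (g : K → K) : (Σ x : K, {y : K // g y = x}) ≃ K where
  toFun p := p.2.1
  invFun y := ⟨g y, y, rfl⟩
  left_inv := by rintro ⟨x, y, rfl⟩; rfl
  right_inv y := rfl

lemma summable_sigma_norm {a : K → ℂ} (ha : Summable fun x => ‖a x‖) (g : K → K) :
    Summable fun p : Σ x : K, {y : K // g y = x} => ‖a p.2.1‖ :=
  (Equiv.summable_iff (sigmaEquiv g)).2 ha

lemma fiber_summable_norm {a : K → ℂ} (ha : Summable fun x => ‖a x‖) (g : K → K) (x : K) :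
    Summable fun y : {y : K // g y = x} => ‖a y.1‖ :=
  ha.subtype _

lemma adj_summable {a : K → ℂ} (ha : Summable fun x => ‖a x‖) (g : K → K) :
    Summable fun x => ‖adjF g a x‖ := by
  have h1 : Summable fun x : K => ∑' y : {y : K // g y = x}, ‖a y.1‖ :=
    (summable_sigma_norm ha g).sigma
  refine h1.of_nonneg_of_le (fun x => norm_nonneg _) (fun x => ?_)
  exact norm_tsum_le_tsum_norm (fiber_summable_norm ha g x)

lemma pair_summable {a : K → ℂ} (ha : Summable fun x => ‖a x‖) (g : K → K) (f : C(K, ℂ)) :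
    Summable fun x => a x * f (g x) := by
  refine Summable.of_norm_bounded (ha.mul_right ‖f‖) (fun x => ?_)
  rw [norm_mul]
  exact mul_le_mul_of_nonneg_left (f.norm_coe_le_norm (g x)) (norm_nonneg _)

lemma adj_pairing {a : K → ℂ} (ha : Summable fun x => ‖a x‖) (g : K → K) (f : C(K, ℂ)) :
    ∑' x : K, adjF g a x * f x = ∑' x : K, a x * f (g x) := by
  have hsum : Summable fun x => a x * f (g x) := pair_summable ha g f
  have hS : Summable fun p : Σ x : K, {y : K // g y = x} => a p.2.1 * f (g p.2.1) :=
    (Equiv.summable_iff (sigmaEquiv g)).2 hsum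
  have h1 : ∀ x : K, adjF g a x * f x = ∑' y : {y : K // g y = x}, a y.1 * f (g y.1) := by
    intro x
    rw [adjF, ← tsum_mul_right]
    exact tsum_congr fun y => by rw [y.2]
  calc ∑' x : K, adjF g a x * f x
      = ∑' x : K, ∑' y : {y : K // g y = x}, a y.1 * f (g y.1) := tsum_congr h1
    _ = ∑' p : Σ x : K, {y : K // g y = x}, a p.2.1 * f (g p.2.1) := (Summable.tsum_sigma hS).symm
    _ = ∑' x : K, a x * f (g x) := Equiv.tsum_eq (sigmaEquiv g) (fun x => a x * f (g x))

lemma pair_summable' {a : K → ℂ} (ha : Summable fun x => ‖a x‖) (f : C(K, ℂ)) :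
    Summable fun x => a x * f x := by
  refine Summable.of_norm_bounded (ha.mul_right ‖f‖) (fun x => ?_)
  rw [norm_mul]
  exact mul_le_mul_of_nonneg_left (f.norm_coe_le_norm x) (norm_nonneg _)

/-- If all pairings of `c` against continuous functions vanish, then `c = 0`. -/
lemma eq_zero_of_pairing {c : K → ℂ} (hc : Summable fun x => ‖c x‖)
    (h : ∀ f : C(K, ℂ), ∑' x : K, c x * f x = 0) (x₀ : K) : c x₀ = 0 := by
  classical
  by_contra hc0
  have hε : (0 : ℝ) < ‖c x₀‖ := by simpa [norm_pos_iff] using hc0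
  obtain ⟨s₀, hs₀⟩ := Filter.eventually_atTop.1
    ((tendsto_tsum_compl_atTop_zero fun x => ‖c x‖).eventually (gt_mem_nhds hε))
  set F : Finset K := insert x₀ s₀ with hF
  have htail : ∑' x : {x : K // x ∉ F}, ‖c x.1‖ < ‖c x₀‖ := hs₀ F (Finset.subset_insert _ _)
  -- Urysohn function
  have hclosed1 : IsClosed (↑(F.erase x₀) : Set K) := (F.erase x₀).finite_toSet.isClosed
  have hclosed2 : IsClosed ({x₀} : Set K) := isClosed_singleton
  have hdisj : Disjoint (↑(F.erase x₀) : Set K) ({x₀} : Set K) := by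
    simp [Set.disjoint_singleton_right]
  obtain ⟨f, hf0, hf1, hf01⟩ := exists_continuous_zero_one_of_isClosed hclosed1 hclosed2 hdisj
  set G : C(K, ℂ) := ⟨fun x => (f x : ℂ), Complex.continuous_ofReal.comp f.continuous⟩ with hG
  have hGnorm : ∀ x, ‖G x‖ ≤ 1 := by
    intro x
    have := hf01 x
    simp only [hG, ContinuousMap.coe_mk, Complex.norm_real]
    rw [Real.norm_eq_abs, abs_le]
    constructor <;> linarith [this.1, this.2]
  have hsumG : Summable fun x => c x * G x := by
    refine Summable.of_norm_bounded hc (fun x => ?_)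
    rw [norm_mul]
    calc ‖c x‖ * ‖G x‖ ≤ ‖c x‖ * 1 :=
          mul_le_mul_of_nonneg_left (hGnorm x) (norm_nonneg _)
      _ = ‖c x‖ := mul_one _
  have hsplit : (∑ x ∈ F, c x * G x) + ∑' x : ↑((F : Set K)ᶜ), c x.1 * G x.1
      = ∑' x : K, c x * G x := Summable.sum_add_tsum_compl hsumG
  have hfin : ∑ x ∈ F, c x * G x = c x₀ := by
    rw [Finset.sum_eq_single_of_mem x₀ (Finset.mem_insert_self _ _)]
    · have : f x₀ = 1 := hf1 rfl
      simp [hG, this]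
    · intro b hb hbne
      have hbF : b ∈ F.erase x₀ := Finset.mem_erase.2 ⟨hbne, hb⟩
      have : f b = 0 := hf0 hbF
      simp [hG, this]
  have hzero : ∑' x : K, c x * G x = 0 := h G
  have hcx : c x₀ = -(∑' x : ↑((F : Set K)ᶜ), c x.1 * G x.1) := by
    rw [hfin] at hsplit
    linear_combination hsplit + hzero
  have hbound : ‖c x₀‖ ≤ ∑' x : {x : K // x ∉ F}, ‖c x.1‖ := by
    rw [hcx, norm_neg]
    have hsub : Summable fun x : ↑((F : Set K)ᶜ) => ‖c x.1 * G x.1‖ := by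
      refine Summable.of_nonneg_of_le (fun x => norm_nonneg _) (fun x => ?_) (hc.subtype _)
      rw [norm_mul]
      calc ‖c x.1‖ * ‖G x.1‖ ≤ ‖c x.1‖ * 1 :=
            mul_le_mul_of_nonneg_left (hGnorm x.1) (norm_nonneg _)
        _ = ‖c x.1‖ := mul_one _
    calc ‖∑' x : ↑((F : Set K)ᶜ), c x.1 * G x.1‖
        ≤ ∑' x : ↑((F : Set K)ᶜ), ‖c x.1 * G x.1‖ := norm_tsum_le_tsum_norm hsub
      _ ≤ ∑' x : ↑((F : Set K)ᶜ), ‖c x.1‖ := by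
          refine Summable.tsum_le_tsum (fun x => ?_) hsub (hc.subtype _)
          rw [norm_mul]
          calc ‖c x.1‖ * ‖G x.1‖ ≤ ‖c x.1‖ * 1 :=
                mul_le_mul_of_nonneg_left (hGnorm x.1) (norm_nonneg _)
            _ = ‖c x.1‖ := mul_one _
      _ = ∑' x : {x : K // x ∉ F}, ‖c x.1‖ := rfl
  exact absurd (lt_of_le_of_lt hbound htail) (lt_irrefl _)

/-- The pairing map `Φ : ℓ¹(K) → (C(K) → ℂ)`. -/
noncomputable def Phi (K : Type*) [TopologicalSpace K] : L1 K → (C(K, ℂ) → ℂ) :=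
  fun a f => ∑' x : K, (a : K → ℂ) x * f x

lemma Phi_injective : Function.Injective (Phi K) := by
  intro a b hab
  have hc : Summable fun x => ‖(a : K → ℂ) x - (b : K → ℂ) x‖ := by
    refine Summable.of_nonneg_of_le (fun x => norm_nonneg _) (fun x => norm_sub_le _ _)
      (a.2.add b.2)
  have h : ∀ f : C(K, ℂ), ∑' x : K, ((a : K → ℂ) x - (b : K → ℂ) x) * f x = 0 := by
    intro f
    have h1 : ∀ x : K, ((a : K → ℂ) x - (b : K → ℂ) x) * f x
        = (a : K → ℂ) x * f x - (b : K → ℂ) x * f x := fun x => sub_mul _ _ _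
    rw [tsum_congr h1, Summable.tsum_sub (pair_summable' a.2 f) (pair_summable' b.2 f)]
    have : Phi K a f = Phi K b f := by rw [hab]
    simpa [Phi] using sub_eq_zero_of_eq this
  ext x
  exact sub_eq_zero.1 (eq_zero_of_pairing hc h x)

/-- For a topological dynamical system `(K;S)`, each `s ∈ S`
induces an adjoint operator on `ℓ¹(K)` given by summation over fibres, which
satisfies `⟨f, T_s'a⟩ = ∑_x a x f (s x)`; moreover every orbit
`{T_s'a : s ∈ S}` is relatively compact in the `σ(ℓ¹(K), C(K))`-topology. -/
theorem ell1_adjoint_orbit_compact (a : L1 K) :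
    (∀ s : S,
      (Summable fun x => ‖adjAt s (a : K → ℂ) x‖) ∧
      ∀ f : C(K, ℂ),
        ∑' x : K, adjAt s (a : K → ℂ) x * f x = ∑' x : K, (a : K → ℂ) x * f (s • x)) ∧
    @IsCompact (L1 K) (ell1WeakTop K)
      (@closure (L1 K) (ell1WeakTop K)
        {b : L1 K | ∃ s : S, ∀ x : K, (b : K → ℂ) x = adjAt s (a : K → ℂ) x}) := by
  constructor
  · intro s
    exact ⟨adj_summable a.2 (fun y => s • y), fun f => adj_pairing a.2 (fun y => s • y) f⟩
  · -- the map from self-maps of K to ℓ¹(K)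
    letI τ : TopologicalSpace (L1 K) := ell1WeakTop K
    have hInd : IsInducing (Phi K) := ⟨rfl⟩
    have hEmb : IsEmbedding (Phi K) := ⟨hInd, Phi_injective⟩
    haveI hT2 : T2Space (L1 K) := hEmb.t2Space
    set Ψ : (K → K) → L1 K := fun g => ⟨adjF g (a : K → ℂ), adj_summable a.2 g⟩ with hΨ
    have hcont : Continuous Ψ := by
      rw [hInd.continuous_iff]
      have heq : (Phi K ∘ Ψ) = fun g (f : C(K, ℂ)) => ∑' x : K, (a : K → ℂ) x * f (g x) := by
        funext g f
        exact adj_pairing a.2 g f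
      rw [heq]
      refine continuous_pi fun f => ?_
      refine continuous_tsum (fun x => ?_) (a.2.mul_right ‖f‖) (fun x g => ?_)
      · exact continuous_const.mul (f.continuous.comp (continuous_apply x))
      · rw [norm_mul]
        exact mul_le_mul_of_nonneg_left (f.norm_coe_le_norm (g x)) (norm_nonneg _)
    have hcomp : IsCompact (Set.range Ψ) := isCompact_range hcont
    have hsub : {b : L1 K | ∃ s : S, ∀ x : K, (b : K → ℂ) x = adjAt s (a : K → ℂ) x}
        ⊆ Set.range Ψ := by
      rintro b ⟨s, hb⟩
      exact ⟨fun y => s • y, (Subtype.ext (funext fun x => (hb x).symm))⟩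
    exact hcomp.of_isClosed_subset isClosed_closure
      (closure_minimal hsub hcomp.isClosed)

end Stmt13
end

section
/- Let (K;S) be a weakly almost periodic topological dynamical system, i.e., for each f ∈ C(K) the orbit 𝒯_S f = {f∘s : s ∈ S} is relatively compact in the weak topology of the Banach space C(K). Then for every R ∈ K(K;S) and every x ∈ K the measure Rδ_x is a Dirac measure δ_{r_R(x)}, and the map K(K;S) → E(K;S), R ↦ r_R, is a multiplicative homeomorphism of compact right topological semigroups (an isomorphism). -/
open Filter Topology Set

namespace Stmt14

variable {K : Type*} [TopologicalSpace K] [CompactSpace K] [T2Space K]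
variable {S : Type*} [Semigroup S] [TopologicalSpace S] [SMul S K]
  [IsScalarTower S S K] [ContinuousSMul S K]

/-- The Koopman operator of `s ∈ S` on `C(K, ℂ)`. -/
noncomputable def koopman (s : S) : C(K, ℂ) →L[ℂ] C(K, ℂ) where
  toFun f := f.comp ⟨fun x => s • x, continuous_const.smul continuous_id⟩
  map_add' f g := by ext x; rfl
  map_smul' c f := by ext x; rfl
  cont := ContinuousMap.continuous_precomp _

/-- The adjoint Koopman operator on the dual `C(K)'`. -/
noncomputable def koopmanDual (s : S) :
    (C(K, ℂ) →L[ℂ] ℂ) → (C(K, ℂ) →L[ℂ] ℂ) :=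
  fun μ => μ.comp (koopman s)

/-- The Dirac functional at `x ∈ K`. -/
noncomputable def dirac (x : K) : C(K, ℂ) →L[ℂ] ℂ :=
  ContinuousMap.evalCLM ℂ x

/-- The weak topology `σ(C(K), C(K)')` on `C(K, ℂ)`. -/
noncomputable def sigmaC (K : Type*) [TopologicalSpace K] [CompactSpace K] :
    TopologicalSpace C(K, ℂ) :=
  TopologicalSpace.induced (fun f (φ : C(K, ℂ) →L[ℂ] ℂ) => φ f) inferInstance

/-- The weak* topology on `C(K)'`. -/
noncomputable def wstarTop (K : Type*) [TopologicalSpace K] [CompactSpace K] :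
    TopologicalSpace (C(K, ℂ) →L[ℂ] ℂ) :=
  TopologicalSpace.induced (fun μ (f : C(K, ℂ)) => μ f) inferInstance

/-- The topology of pointwise weak* convergence on maps `C(K)' → C(K)'`. -/
noncomputable def piWstar (K : Type*) [TopologicalSpace K] [CompactSpace K] :
    TopologicalSpace ((C(K, ℂ) →L[ℂ] ℂ) → (C(K, ℂ) →L[ℂ] ℂ)) :=
  @Pi.topologicalSpace _ _ (fun _ => wstarTop K)

/-- The Köhler semigroup `K(K;S)`: the closure of `𝒯_S'` in `(C(K)')^(C(K)')`
with the topology of pointwise weak* convergence. -/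
noncomputable def KohlerDS (K : Type*) [TopologicalSpace K] [CompactSpace K]
    (S : Type*) [Semigroup S] [TopologicalSpace S] [SMul S K] [IsScalarTower S S K]
    [ContinuousSMul S K] : Set ((C(K, ℂ) →L[ℂ] ℂ) → (C(K, ℂ) →L[ℂ] ℂ)) :=
  @closure _ (piWstar K) (range (koopmanDual (K := K) (S := S)))

/-- The Ellis semigroup `E(K;S)`. -/
def Ellis (K : Type*) [TopologicalSpace K] (S : Type*) [SMul S K] : Set (K → K) :=
  closure (range fun s : S => fun x : K => s • x)

set_option linter.unusedSectionVars false
set_option linter.unusedVariables false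

/-! ### Auxiliary definitions -/

lemma koopman_apply (s : S) (f : C(K, ℂ)) (x : K) : koopman s f x = f (s • x) := rfl

lemma dirac_apply (x : K) (f : C(K, ℂ)) : dirac x f = f x := rfl

/-- Koopman operator of a continuous self-map. -/
noncomputable def koopmanC (φ : C(K, K)) : C(K, ℂ) →L[ℂ] C(K, ℂ) where
  toFun f := f.comp φ
  map_add' f g := by ext x; rfl
  map_smul' c f := by ext x; rfl
  cont := ContinuousMap.continuous_precomp _

/-- The adjoint of the Koopman operator of a continuous self-map. -/
noncomputable def sigC (φ : C(K, K)) : (C(K, ℂ) →L[ℂ] ℂ) → (C(K, ℂ) →L[ℂ] ℂ) :=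
  fun μ => μ.comp (koopmanC φ)

lemma sigC_apply (φ : C(K, K)) (μ : C(K, ℂ) →L[ℂ] ℂ) (f : C(K, ℂ)) :
    sigC φ μ f = μ (f.comp φ) := rfl

lemma sigC_congr {φ φ' : C(K, K)} (h : ⇑φ = ⇑φ') : sigC φ = sigC φ' := by
  have : φ = φ' := ContinuousMap.ext fun x => congrFun h x
  rw [this]

lemma sigC_dirac (φ : C(K, K)) (x : K) : sigC φ (dirac x) = dirac (φ x) := by
  ext f; rfl

lemma sigC_comp (φ φ' : C(K, K)) : sigC φ ∘ sigC φ' = sigC (φ.comp φ') := by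
  funext μ; ext f; rfl

/-- The candidate inverse map: the adjoint Koopman operator when continuous. -/
noncomputable def sigF (ψ : K → K) : (C(K, ℂ) →L[ℂ] ℂ) → (C(K, ℂ) →L[ℂ] ℂ) :=
  @dite _ (Continuous ψ) (Classical.propDecidable _) (fun h => sigC ⟨ψ, h⟩) (fun _ => id)

lemma sigF_of_continuous {ψ : K → K} (h : Continuous ψ) : sigF ψ = sigC ⟨ψ, h⟩ := by
  unfold sigF; exact dif_pos h

/-- The restriction map. -/
noncomputable def rhoF : ((C(K, ℂ) →L[ℂ] ℂ) → (C(K, ℂ) →L[ℂ] ℂ)) → K → K :=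
  fun R x => @dite _ (∃ y : K, R (dirac x) = dirac y) (Classical.propDecidable _)
    (fun h => h.choose) (fun _ => x)

lemma dirac_injective : Function.Injective (dirac (K := K)) := by
  intro x y hxy
  by_contra hne
  obtain ⟨f, hf0, hf1, -⟩ := exists_continuous_zero_one_of_isClosed
    (isClosed_singleton (x := x)) (isClosed_singleton (x := y))
    (by simpa [Set.disjoint_singleton] using hne)
  have h := congrArg (fun μ : C(K, ℂ) →L[ℂ] ℂ =>
    μ ⟨fun z => (f z : ℂ), Complex.continuous_ofReal.comp f.continuous⟩) hxy
  simp only [dirac_apply, ContinuousMap.coe_mk] at h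
  rw [hf0 rfl, hf1 rfl] at h
  simp at h

lemma rhoF_spec {R : (C(K, ℂ) →L[ℂ] ℂ) → (C(K, ℂ) →L[ℂ] ℂ)} {x y : K}
    (h : R (dirac x) = dirac y) : rhoF R x = y := by
  have hex : ∃ y : K, R (dirac x) = dirac y := ⟨y, h⟩
  unfold rhoF
  rw [dif_pos hex]
  exact dirac_injective (hex.choose_spec.symm.trans h)

lemma rhoF_sigC (φ : C(K, K)) : rhoF (sigC φ) = ⇑φ :=
  funext fun x => rhoF_spec (sigC_dirac φ x)

/-! ### Topology lemmas -/

lemma wstar_t2 : @T2Space (C(K, ℂ) →L[ℂ] ℂ) (wstarTop K) := by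
  letI := wstarTop K
  refine ⟨fun μ ν h => ?_⟩
  have hinj : Function.Injective (fun (μ : C(K, ℂ) →L[ℂ] ℂ) (f : C(K, ℂ)) => μ f) :=
    fun a b hab => ContinuousLinearMap.ext fun f => congrFun hab f
  exact separated_by_continuous continuous_induced_dom fun hc => h (hinj hc)

lemma piW_t2 : @T2Space ((C(K, ℂ) →L[ℂ] ℂ) → (C(K, ℂ) →L[ℂ] ℂ)) (piWstar K) := by
  letI := wstarTop K
  haveI := wstar_t2 (K := K)
  exact Pi.t2Space

lemma cont_eval_w (f : C(K, ℂ)) :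
    @Continuous _ ℂ (wstarTop K) _ (fun μ : C(K, ℂ) →L[ℂ] ℂ => μ f) := by
  letI := wstarTop K
  exact (continuous_apply f).comp continuous_induced_dom

lemma cont_dirac : @Continuous K _ _ (wstarTop K) (dirac (K := K)) := by
  letI := wstarTop K
  apply continuous_induced_rng.mpr
  show Continuous fun (x : K) (f : C(K, ℂ)) => f x
  exact continuous_pi fun f => map_continuous f

lemma tendsto_wstar_iff {α : Type*} {l : Filter α} {F : α → C(K, ℂ) →L[ℂ] ℂ}
    {μ : C(K, ℂ) →L[ℂ] ℂ} :
    Tendsto F l (@nhds _ (wstarTop K) μ) ↔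
      ∀ f : C(K, ℂ), Tendsto (fun i => F i f) l (𝓝 (μ f)) := by
  have h : @nhds _ (wstarTop K) μ
      = comap (fun ν (f : C(K, ℂ)) => ν f) (𝓝 fun f => μ f) := nhds_induced _ _
  rw [h, tendsto_comap_iff]
  exact tendsto_pi_nhds

lemma tendsto_sigma_iff {α : Type*} {l : Filter α} {F : α → C(K, ℂ)} {g : C(K, ℂ)} :
    Tendsto F l (@nhds _ (sigmaC K) g) ↔
      ∀ μ : C(K, ℂ) →L[ℂ] ℂ, Tendsto (fun i => μ (F i)) l (𝓝 (μ g)) := by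
  have h : @nhds _ (sigmaC K) g
      = comap (fun h (μ : C(K, ℂ) →L[ℂ] ℂ) => μ h) (𝓝 fun μ => μ g) := nhds_induced _ _
  rw [h, tendsto_comap_iff]
  exact tendsto_pi_nhds

lemma tendsto_piW_iff {α : Type*} {l : Filter α}
    {F : α → (C(K, ℂ) →L[ℂ] ℂ) → (C(K, ℂ) →L[ℂ] ℂ)}
    {R : (C(K, ℂ) →L[ℂ] ℂ) → (C(K, ℂ) →L[ℂ] ℂ)} :
    Tendsto F l (@nhds _ (piWstar K) R) ↔
      ∀ (μ : C(K, ℂ) →L[ℂ] ℂ) (f : C(K, ℂ)),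
        Tendsto (fun i => F i μ f) l (𝓝 (R μ f)) := by
  letI := wstarTop K
  constructor
  · intro h μ f
    exact tendsto_wstar_iff.mp (tendsto_pi_nhds.mp h μ) f
  · intro h
    exact tendsto_pi_nhds.mpr fun μ => tendsto_wstar_iff.mpr (h μ)

lemma pullback_ultrafilter {α : Type*} {ts : TopologicalSpace α} {j : S → α} {a : α}
    (ha : a ∈ @closure _ ts (range j)) :
    ∃ u : Ultrafilter S, Tendsto j (↑u) (@nhds _ ts a) := by
  classical
  letI := ts
  obtain ⟨u₀, hmem, hle⟩ := mem_closure_iff_ultrafilter.mp ha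
  obtain ⟨b, hb⟩ := u₀.nonempty_of_mem hmem
  obtain ⟨s₀, -⟩ := hb
  haveI : Nonempty S := ⟨s₀⟩
  set g : α → S := fun b => if h : ∃ s, j s = b then h.choose else Classical.arbitrary S
    with hg
  refine ⟨u₀.map g, ?_⟩
  have heq : (j ∘ g) =ᶠ[↑u₀] id := by
    filter_upwards [hmem] with b hb
    obtain ⟨s, hs⟩ := hb
    have hex : ∃ s, j s = b := ⟨s, hs⟩
    simp only [Function.comp_apply, hg, dif_pos hex, id_eq]
    exact hex.choose_spec
  have : Tendsto j (map g ↑u₀) (𝓝 a) := by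
    rw [tendsto_map'_iff]
    exact (tendsto_congr' heq).mpr hle
  simpa [Ultrafilter.coe_map] using this

lemma continuous_of_comp {ψ : K → K} (h : ∀ f : C(K, ℂ), Continuous fun x => f (ψ x)) :
    Continuous ψ := by
  rw [continuous_iff_isClosed]
  intro C hC
  refine isClosed_of_closure_subset fun x hx => ?_
  by_contra hxC
  obtain ⟨f, hf0, hf1, -⟩ := exists_continuous_zero_one_of_isClosed hC
    (isClosed_singleton (x := ψ x)) (disjoint_singleton_right.mpr hxC)
  set g : C(K, ℂ) := ⟨fun z => (f z : ℂ), Complex.continuous_ofReal.comp f.continuous⟩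
    with hgdef
  have h0 : EqOn (fun z => g (ψ z)) 0 (ψ ⁻¹' C) := by
    intro z hz
    have : f (ψ z) = 0 := hf0 hz
    simp [hgdef, this]
  have hcl : EqOn (fun z => g (ψ z)) 0 (closure (ψ ⁻¹' C)) :=
    h0.closure (h g) continuous_const
  have h1 : g (ψ x) = 0 := hcl hx
  have h2 : f (ψ x) = 1 := hf1 rfl
  simp [hgdef, h2] at h1

/-! ### The key ultrafilter limit lemma -/

lemma key_lemma
    (hwap : ∀ f : C(K, ℂ), @IsCompact _ (sigmaC K)
      (@closure _ (sigmaC K) (range fun s : S => koopman s f)))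
    (u : Ultrafilter S) :
    ∃ φ : C(K, K),
      Tendsto (fun s : S => fun x : K => s • x) (↑u) (𝓝 ⇑φ) ∧
      Tendsto (fun s : S => koopmanDual (K := K) s) (↑u)
        (@nhds _ (piWstar K) (sigC φ)) := by
  classical
  have hpt : ∀ x : K, ∃ y : K, Tendsto (fun s : S => s • x) (↑u) (𝓝 y) := by
    intro x
    obtain ⟨y, -, hy⟩ := isCompact_univ.ultrafilter_le_nhds (u.map fun s : S => s • x)
      (by simp)
    exact ⟨y, (by simpa [Ultrafilter.coe_map] using hy : map (fun s : S => s • x) ↑u ≤ 𝓝 y)⟩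
  choose ψ₀ hψ₀ using hpt
  have horb : ∀ f : C(K, ℂ), ∃ g : C(K, ℂ),
      ∀ μ : C(K, ℂ) →L[ℂ] ℂ, Tendsto (fun s : S => μ (koopman s f)) (↑u) (𝓝 (μ g)) := by
    intro f
    have hmem : (@closure _ (sigmaC K) (range fun s : S => koopman s f))
        ∈ (u.map fun s : S => koopman s f) := by
      have hsub : (range fun s : S => koopman s f)
          ⊆ @closure _ (sigmaC K) (range fun s : S => koopman s f) := by
        letI : TopologicalSpace C(K, ℂ) := sigmaC K
        exact subset_closure
      exact mem_map.mpr (Filter.univ_mem' fun s => hsub ⟨s, rfl⟩)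
    obtain ⟨g, -, hg⟩ := @IsCompact.ultrafilter_le_nhds _ (sigmaC K) _ (hwap f)
      (u.map fun s : S => koopman s f) (le_principal_iff.mpr hmem)
    refine ⟨g, ?_⟩
    have : Tendsto (fun s : S => koopman s f) (↑u) (@nhds _ (sigmaC K) g) := by
      exact (by simpa [Ultrafilter.coe_map] using hg :
        map (fun s : S => koopman s f) ↑u ≤ @nhds _ (sigmaC K) g)
    exact tendsto_sigma_iff.mp this
  choose g hg using horb
  have hgx : ∀ (f : C(K, ℂ)) (x : K), g f x = f (ψ₀ x) := by
    intro f x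
    have h1 : Tendsto (fun s : S => f (s • x)) (↑u) (𝓝 (g f x)) := hg f (dirac x)
    have h2 : Tendsto (fun s : S => f (s • x)) (↑u) (𝓝 (f (ψ₀ x))) :=
      (f.continuous.tendsto _).comp (hψ₀ x)
    exact tendsto_nhds_unique h1 h2
  have hcont : Continuous ψ₀ := by
    refine continuous_of_comp fun f => ?_
    have : (fun x => f (ψ₀ x)) = ⇑(g f) := funext fun x => (hgx f x).symm
    rw [this]
    exact (g f).continuous
  refine ⟨⟨ψ₀, hcont⟩, tendsto_pi_nhds.mpr hψ₀, ?_⟩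
  rw [tendsto_piW_iff]
  intro μ f
  have hgf : g f = ContinuousMap.comp f ⟨ψ₀, hcont⟩ := ContinuousMap.ext fun x => hgx f x
  have := hg f μ
  rw [hgf] at this
  exact this

/-! ### Representation of Köhler and Ellis elements -/

lemma kohler_repr
    (hwap : ∀ f : C(K, ℂ), @IsCompact _ (sigmaC K)
      (@closure _ (sigmaC K) (range fun s : S => koopman s f)))
    {R : (C(K, ℂ) →L[ℂ] ℂ) → (C(K, ℂ) →L[ℂ] ℂ)} (hR : R ∈ KohlerDS K S) :
    ∃ φ : C(K, K), R = sigC φ ∧ ⇑φ ∈ Ellis K S := by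
  have hR' : R ∈ @closure _ (piWstar K) (range (koopmanDual (K := K) (S := S))) := hR
  obtain ⟨u, hu⟩ := pullback_ultrafilter (ts := piWstar K) hR'
  obtain ⟨φ, h1, h2⟩ := key_lemma hwap u
  have hRφ : R = sigC φ := by
    letI := piWstar K
    haveI := piW_t2 (K := K)
    exact tendsto_nhds_unique hu h2
  refine ⟨φ, hRφ, ?_⟩
  exact mem_closure_of_tendsto h1 (Eventually.of_forall fun s => mem_range_self s)

lemma ellis_repr
    (hwap : ∀ f : C(K, ℂ), @IsCompact _ (sigmaC K)
      (@closure _ (sigmaC K) (range fun s : S => koopman s f)))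
    {ψ : K → K} (hψ : ψ ∈ Ellis K S) :
    ∃ φ : C(K, K), ⇑φ = ψ ∧ sigC φ ∈ KohlerDS K S := by
  obtain ⟨u, hu⟩ := pullback_ultrafilter (ts := inferInstance) hψ
  obtain ⟨φ, h1, h2⟩ := key_lemma hwap u
  refine ⟨φ, tendsto_nhds_unique h1 hu, ?_⟩
  letI := piWstar K
  exact mem_closure_of_tendsto h2 (Eventually.of_forall fun s => mem_range_self s)

/-! ### Composition -/

lemma koopmanDual_mul (s t : S) :
    koopmanDual (K := K) s ∘ koopmanDual t = koopmanDual (s * t) := by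
  funext μ
  ext f
  show μ (koopman t (koopman s f)) = μ (koopman (s * t) f)
  congr 1
  ext x
  show f (s • t • x) = f ((s * t) • x)
  rw [← smul_eq_mul, smul_assoc]

lemma cont_koopmanDual_w (s : S) :
    @Continuous _ _ (wstarTop K) (wstarTop K) (koopmanDual (K := K) s) := by
  letI := wstarTop K
  apply continuous_induced_rng.mpr
  show Continuous fun (μ : C(K, ℂ) →L[ℂ] ℂ) (f : C(K, ℂ)) => μ (koopman s f)
  exact continuous_pi fun f => cont_eval_w (koopman s f)

lemma kohler_comp {R R' : (C(K, ℂ) →L[ℂ] ℂ) → (C(K, ℂ) →L[ℂ] ℂ)}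
    (hR : R ∈ KohlerDS K S) (hR' : R' ∈ KohlerDS K S) :
    R ∘ R' ∈ KohlerDS K S := by
  letI iw : TopologicalSpace (C(K, ℂ) →L[ℂ] ℂ) := wstarTop K
  letI ip : TopologicalSpace ((C(K, ℂ) →L[ℂ] ℂ) → (C(K, ℂ) →L[ℂ] ℂ)) := piWstar K
  have hstep1 : ∀ t : S, (koopmanDual (K := K) t) ∘ R' ∈ KohlerDS K S := by
    intro t
    have hc : Continuous fun F : (C(K, ℂ) →L[ℂ] ℂ) → (C(K, ℂ) →L[ℂ] ℂ) =>
        koopmanDual (K := K) t ∘ F := by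
      apply continuous_pi
      intro μ
      exact (cont_koopmanDual_w t).comp (continuous_apply μ)
    have h1 : (fun F => koopmanDual (K := K) t ∘ F) R' ∈
        closure ((fun F => koopmanDual (K := K) t ∘ F) ''
          (range (koopmanDual (K := K) (S := S)))) :=
      image_closure_subset_closure_image hc (mem_image_of_mem _ hR')
    refine closure_mono ?_ h1
    rintro _ ⟨_, ⟨s, rfl⟩, rfl⟩
    exact ⟨t * s, (koopmanDual_mul t s).symm⟩
  have hc2 : Continuous fun F : (C(K, ℂ) →L[ℂ] ℂ) → (C(K, ℂ) →L[ℂ] ℂ) => F ∘ R' :=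
    continuous_pi fun μ => continuous_apply (R' μ)
  have h2 : (fun F => F ∘ R') R ∈
      closure ((fun F => F ∘ R') '' (range (koopmanDual (K := K) (S := S)))) :=
    image_closure_subset_closure_image hc2 (mem_image_of_mem _ hR)
  have h3 : ((fun F => F ∘ R') '' (range (koopmanDual (K := K) (S := S))))
      ⊆ KohlerDS K S := by
    rintro _ ⟨_, ⟨s, rfl⟩, rfl⟩
    exact hstep1 s
  exact closure_minimal h3 isClosed_closure h2

/-! ### Compactness of the Köhler semigroup -/

lemma isCompact_wball (r : ℝ) :
    @IsCompact _ (wstarTop K) {μ : C(K, ℂ) →L[ℂ] ℂ | ‖μ‖ ≤ r} := by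
  have hset : {μ : C(K, ℂ) →L[ℂ] ℂ | ‖μ‖ ≤ r}
      = (WeakDual.toStrongDual (𝕜 := ℂ) (E := C(K, ℂ))) ⁻¹' Metric.closedBall 0 r := by
    ext μ; simp [mem_closedBall_zero_iff]; exact mem_closedBall_zero_iff.symm
  have h := WeakDual.isCompact_closedBall (𝕜 := ℂ) (E := C(K, ℂ)) 0 r
  exact hset ▸ h

lemma kohler_isCompact : @IsCompact _ (piWstar K) (KohlerDS K S) := by
  letI iw : TopologicalSpace (C(K, ℂ) →L[ℂ] ℂ) := wstarTop K
  letI ip : TopologicalSpace ((C(K, ℂ) →L[ℂ] ℂ) → (C(K, ℂ) →L[ℂ] ℂ)) := piWstar K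
  haveI := piW_t2 (K := K)
  have hC : IsCompact {F : (C(K, ℂ) →L[ℂ] ℂ) → (C(K, ℂ) →L[ℂ] ℂ) | ∀ μ, ‖F μ‖ ≤ ‖μ‖} := by
    have heq : {F : (C(K, ℂ) →L[ℂ] ℂ) → (C(K, ℂ) →L[ℂ] ℂ) | ∀ μ, ‖F μ‖ ≤ ‖μ‖}
        = Set.pi univ (fun μ : C(K, ℂ) →L[ℂ] ℂ => {ν | ‖ν‖ ≤ ‖μ‖}) := by
      ext F; simp [Set.mem_pi]
    rw [heq]
    exact isCompact_univ_pi fun μ => isCompact_wball ‖μ‖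
  have hsub : range (koopmanDual (K := K) (S := S))
      ⊆ {F | ∀ μ, ‖F μ‖ ≤ ‖μ‖} := by
    rintro _ ⟨s, rfl⟩ μ
    refine ContinuousLinearMap.opNorm_le_bound _ (norm_nonneg μ) fun f => ?_
    have hk : ‖koopman s f‖ ≤ ‖f‖ := by
      refine (ContinuousMap.norm_le _ (norm_nonneg f)).mpr fun x => ?_
      exact f.norm_coe_le_norm (s • x)
    calc ‖μ (koopman s f)‖ ≤ ‖μ‖ * ‖koopman s f‖ := μ.le_opNorm _
      _ ≤ ‖μ‖ * ‖f‖ := mul_le_mul_of_nonneg_left hk (norm_nonneg μ)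
  exact IsCompact.of_isClosed_subset hC isClosed_closure (closure_minimal hsub hC.isClosed)


/-- For a weakly almost periodic system `(K;S)`, every
element of the Köhler semigroup maps Dirac measures to Dirac measures, and the
induced restriction map is an isomorphism of compact right topological
semigroups from `K(K;S)` onto the Ellis semigroup `E(K;S)`. -/
theorem wap_kohler_iso_ellis
    (hleftc : ∀ s : S, Continuous fun t : S => s * t)
    (hrightc : ∀ s : S, Continuous fun t : S => t * s)
    (hwap : ∀ f : C(K, ℂ), @IsCompact _ (sigmaC K)
      (@closure _ (sigmaC K) (range fun s : S => koopman s f))) :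
    ∃ ρ : ((C(K, ℂ) →L[ℂ] ℂ) → (C(K, ℂ) →L[ℂ] ℂ)) → (K → K),
      (∀ R ∈ KohlerDS K S, ∀ x : K, R (dirac x) = dirac (ρ R x)) ∧
      (∀ R ∈ KohlerDS K S, ρ R ∈ Ellis K S) ∧
      (∀ ψ ∈ Ellis K S, ∃ R ∈ KohlerDS K S, ρ R = ψ) ∧
      (∀ R ∈ KohlerDS K S, ∀ R' ∈ KohlerDS K S,
        (R ∘ R' ∈ KohlerDS K S) ∧ ρ (R ∘ R') = ρ R ∘ ρ R') ∧
      (Set.InjOn ρ (KohlerDS K S)) ∧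
      @ContinuousOn _ _ (piWstar K) _ ρ (KohlerDS K S) ∧
      (∃ σ : (K → K) → ((C(K, ℂ) →L[ℂ] ℂ) → (C(K, ℂ) →L[ℂ] ℂ)),
        @ContinuousOn _ _ _ (piWstar K) σ (Ellis K S) ∧
        (∀ ψ ∈ Ellis K S, σ ψ ∈ KohlerDS K S ∧ ρ (σ ψ) = ψ) ∧
        ∀ R ∈ KohlerDS K S, σ (ρ R) = R) := by
  classical
  -- property 1
  have hp1 : ∀ R ∈ KohlerDS K S, ∀ x : K, R (dirac x) = dirac (rhoF R x) := by
    intro R hR x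
    obtain ⟨φ, rfl, -⟩ := kohler_repr hwap hR
    rw [rhoF_sigC]
    exact sigC_dirac φ x
  -- property 2
  have hp2 : ∀ R ∈ KohlerDS K S, rhoF R ∈ Ellis K S := by
    intro R hR
    obtain ⟨φ, rfl, hmem⟩ := kohler_repr hwap hR
    rw [rhoF_sigC]
    exact hmem
  -- property 3
  have hp3 : ∀ ψ ∈ Ellis K S, ∃ R ∈ KohlerDS K S, rhoF R = ψ := by
    intro ψ hψ
    obtain ⟨φ, hφψ, hk⟩ := ellis_repr hwap hψ
    exact ⟨sigC φ, hk, by rw [rhoF_sigC, hφψ]⟩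
  -- property 4
  have hp4 : ∀ R ∈ KohlerDS K S, ∀ R' ∈ KohlerDS K S,
      (R ∘ R' ∈ KohlerDS K S) ∧ rhoF (R ∘ R') = rhoF R ∘ rhoF R' := by
    intro R hR R' hR'
    refine ⟨kohler_comp hR hR', ?_⟩
    obtain ⟨φ, rfl, -⟩ := kohler_repr hwap hR
    obtain ⟨φ', rfl, -⟩ := kohler_repr hwap hR'
    rw [sigC_comp, rhoF_sigC, rhoF_sigC, rhoF_sigC]
    rfl
  -- property 5
  have hp5 : Set.InjOn rhoF (KohlerDS K S) := by
    intro R hR R' hR' h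
    obtain ⟨φ, rfl, -⟩ := kohler_repr hwap hR
    obtain ⟨φ', rfl, -⟩ := kohler_repr hwap hR'
    rw [rhoF_sigC, rhoF_sigC] at h
    exact sigC_congr h
  -- property 6
  have hp6 : @ContinuousOn _ _ (piWstar K) _ rhoF (KohlerDS K S) := by
    letI ip : TopologicalSpace ((C(K, ℂ) →L[ℂ] ℂ) → (C(K, ℂ) →L[ℂ] ℂ)) := piWstar K
    rw [continuousOn_iff_continuous_restrict]
    apply continuous_pi
    intro x
    letI iw : TopologicalSpace (C(K, ℂ) →L[ℂ] ℂ) := wstarTop K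
    haveI := wstar_t2 (K := K)
    have hemb : Topology.IsEmbedding (dirac (K := K)) :=
      ((cont_dirac (K := K)).isClosedEmbedding dirac_injective).toIsEmbedding
    rw [hemb.continuous_iff]
    have heq : (dirac ∘ fun R : (KohlerDS K S : Set _) =>
        (KohlerDS K S).domRestrict rhoF R x)
        = fun R : (KohlerDS K S : Set _) => R.1 (dirac x) := by
      funext R
      exact (hp1 _ R.2 x).symm
    rw [heq]
    exact (continuous_apply (dirac x)).comp continuous_subtype_val
  -- the inverse map
  have hsig_rho : ∀ R ∈ KohlerDS K S, sigF (rhoF R) = R := by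
    intro R hR
    obtain ⟨φ, rfl, -⟩ := kohler_repr hwap hR
    rw [rhoF_sigC, sigF_of_continuous φ.continuous]
    exact sigC_congr rfl
  have hsig_mem : ∀ ψ ∈ Ellis K S, sigF ψ ∈ KohlerDS K S ∧ rhoF (sigF ψ) = ψ := by
    intro ψ hψ
    obtain ⟨φ, rfl, hk⟩ := ellis_repr hwap hψ
    rw [sigF_of_continuous φ.continuous]
    have hcφ : sigC ⟨⇑φ, φ.continuous⟩ = sigC φ := sigC_congr rfl
    rw [hcφ]
    exact ⟨hk, rhoF_sigC φ⟩
  refine ⟨rhoF, hp1, hp2, hp3, hp4, hp5, hp6, sigF, ?_, hsig_mem, hsig_rho⟩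
  -- continuity of the inverse, via compactness
  letI ip : TopologicalSpace ((C(K, ℂ) →L[ℂ] ℂ) → (C(K, ℂ) →L[ℂ] ℂ)) := piWstar K
  haveI := piW_t2 (K := K)
  haveI : CompactSpace (KohlerDS K S) := isCompact_iff_compactSpace.mp kohler_isCompact
  have hbij : Function.Bijective (fun R : (KohlerDS K S : Set _) =>
      (⟨rhoF R.1, hp2 _ R.2⟩ : (Ellis K S : Set _))) := by
    constructor
    · intro R R' h
      apply Subtype.ext
      have hval : rhoF R.1 = rhoF R'.1 := congrArg Subtype.val h
      rw [← hsig_rho _ R.2, ← hsig_rho _ R'.2, hval]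
    · intro ψ
      exact ⟨⟨sigF ψ.1, (hsig_mem _ ψ.2).1⟩, Subtype.ext (hsig_mem _ ψ.2).2⟩
  have hecont : Continuous (fun R : (KohlerDS K S : Set _) =>
      (⟨rhoF R.1, hp2 _ R.2⟩ : (Ellis K S : Set _))) := by
    apply Continuous.subtype_mk
    exact continuousOn_iff_continuous_restrict.mp hp6
  let e : (KohlerDS K S : Set _) ≃ (Ellis K S : Set _) := Equiv.ofBijective _ hbij
  have hecont' : Continuous ⇑e := hecont
  let homeo := Continuous.homeoOfEquivCompactToT2 (f := e) hecont'
  rw [continuousOn_iff_continuous_restrict]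
  have hrestr : (Ellis K S).domRestrict sigF = Subtype.val ∘ ⇑homeo.symm := by
    funext ψ
    have h1 : e ⟨sigF ψ.1, (hsig_mem _ ψ.2).1⟩ = ψ := Subtype.ext (hsig_mem _ ψ.2).2
    have h2 : homeo.symm ψ = ⟨sigF ψ.1, (hsig_mem _ ψ.2).1⟩ := by
      apply e.injective
      rw [h1]
      show e (e.symm ψ) = ψ
      exact e.apply_symm_apply ψ
    show sigF ψ.1 = (homeo.symm ψ).1
    rw [h2]
  rw [hrestr]
  exact continuous_subtype_val.comp homeo.symm.continuous


end Stmt14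
end

section
/- Let X be a Hausdorff locally convex space and 𝒮 ⊆ L(X) a subsemigroup that is left amenable for the topology of pointwise convergence and has relatively compact convex orbits, i.e., {Tx : T ∈ co 𝒮} is relatively compact in X for every x ∈ X. Then the kernel of K(co 𝒮) is nonempty and satisfies ker(K(co 𝒮)) = {Q ∈ K(co 𝒮) : T∘Q = Q for all T ∈ 𝒮} = {Q ∈ K(co 𝒮) : Q is a right zero of K(co 𝒮)}. -/
open Filter Topology Set

namespace Stmt16

variable {X : Type*} [AddCommGroup X] [Module ℂ X] [TopologicalSpace X]
  [IsTopologicalAddGroup X] [ContinuousSMul ℂ X] [T2Space X] [LocallyConvexSpace ℝ X]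

/-- The underlying functions of a set of continuous linear operators. -/
def carrier (S : Set (X →L[ℂ] X)) : Set (X → X) :=
  (fun T : X →L[ℂ] X => (T : X → X)) '' S

/-- The convex hull `co 𝒮` of the operator set, taken inside `X → X`. -/
noncomputable def convS (S : Set (X →L[ℂ] X)) : Set (X → X) :=
  convexHull ℝ (carrier S)

/-- The Köhler semigroup `K(co 𝒮)`: the closure of `co 𝒮` in `X → X` with the
topology of pointwise convergence. -/
noncomputable def KohlerConv (S : Set (X →L[ℂ] X)) : Set (X → X) :=
  closure (convS S)

/-- Left amenability of a set of maps `A ⊆ X → X`, viewed as a semigroup under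
composition with the topology of pointwise convergence. -/
def IsLeftAmenableSet (A : Set (X → X)) : Prop :=
  ∃ m : BoundedContinuousFunction A ℝ →ₗ[ℝ] ℝ,
    (∀ f : BoundedContinuousFunction A ℝ, (∀ t, 0 ≤ f t) → 0 ≤ m f) ∧
    m 1 = 1 ∧
    ∀ (s : A) (f g : BoundedContinuousFunction A ℝ),
      (∀ (t : A) (h : (s : X → X) ∘ (t : X → X) ∈ A),
        g t = f ⟨(s : X → X) ∘ (t : X → X), h⟩) →
      m g = m f

/-- `I` is a (two-sided) ideal of the semigroup `G ⊆ X → X` under composition: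
a nonempty subset of `G` with `G ∘ I ⊆ I` and `I ∘ G ⊆ I`. -/
def IsIdealOf (G I : Set (X → X)) : Prop :=
  I.Nonempty ∧ I ⊆ G ∧ ∀ a ∈ G, ∀ b ∈ I, a ∘ b ∈ I ∧ b ∘ a ∈ I

/-- The kernel of a semigroup `G ⊆ X → X`: the intersection of all its ideals. -/
def semigroupKernel (G : Set (X → X)) : Set (X → X) :=
  ⋂₀ {I | IsIdealOf G I}

/-- `Q` is a right zero of `A ⊆ X → X` with respect to composition. -/
def IsRightZeroIn (A : Set (X → X)) (Q : X → X) : Prop :=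
  Q ∈ A ∧ ∀ R ∈ A, R ∘ Q = Q

set_option linter.unusedSectionVars false

variable {S : Set (X →L[ℂ] X)}

instance : ContinuousSMul ℝ X := ⟨by
  have h : Continuous fun p : ℝ × X => ((p.1 : ℂ)) • p.2 :=
    continuous_smul.comp ((Complex.continuous_ofReal.comp continuous_fst).prodMk continuous_snd)
  simpa only [Complex.coe_smul] using h⟩

/-- Left composition by a continuous linear operator, as a real-linear map on `X → X`. -/
def leftCompL (T : X →L[ℂ] X) : (X → X) →ₗ[ℝ] (X → X) where
  toFun f := (T : X → X) ∘ f
  map_add' f g := by funext x; simp [Function.comp]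
  map_smul' r f := by
    funext x
    show T ((r • f) x) = (r • ((T : X → X) ∘ f)) x
    simp only [Pi.smul_apply, Function.comp_apply, ← Complex.coe_smul, map_smul]

/-- Right composition by a fixed map, as a real-linear map on `X → X`. -/
def rightCompL (g : X → X) : (X → X) →ₗ[ℝ] (X → X) where
  toFun f := f ∘ g
  map_add' _ _ := rfl
  map_smul' _ _ := rfl

lemma continuous_leftComp (T : X →L[ℂ] X) :
    Continuous fun f : X → X => (T : X → X) ∘ f :=
  continuous_pi fun x => T.continuous.comp (continuous_apply x)

lemma continuous_rightComp (g : X → X) :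
    Continuous fun f : X → X => f ∘ g :=
  continuous_pi fun x => continuous_apply (g x)

variable {S : Set (X →L[ℂ] X)}

lemma carrier_subset_convS : carrier S ⊆ convS S := subset_convexHull ℝ _
lemma convS_subset_Kohler : convS S ⊆ KohlerConv S := subset_closure
lemma convex_convS : Convex ℝ (convS S) := convex_convexHull ℝ _
lemma convex_Kohler : Convex ℝ (KohlerConv S) := (convex_convS).closure

lemma leftComp_mem_convS (hsemi : ∀ a ∈ S, ∀ b ∈ S, a ∘L b ∈ S)
    {T : X →L[ℂ] X} (hT : T ∈ S) {g : X → X} (hg : g ∈ convS S) :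
    (T : X → X) ∘ g ∈ convS S := by
  have h0 : (fun f : X → X => (T : X → X) ∘ f) '' convS S
      = convexHull ℝ ((fun f : X → X => (T : X → X) ∘ f) '' carrier S) :=
    (leftCompL T).image_convexHull (carrier S)
  have hsub : (fun f : X → X => (T : X → X) ∘ f) '' carrier S ⊆ carrier S := by
    rintro _ ⟨_, ⟨R, hR, rfl⟩, rfl⟩
    exact ⟨T ∘L R, hsemi T hT R hR, rfl⟩
  have h1 : (T : X → X) ∘ g ∈ (fun f : X → X => (T : X → X) ∘ f) '' convS S := ⟨g, hg, rfl⟩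
  rw [h0] at h1
  exact convexHull_min (hsub.trans carrier_subset_convS) convex_convS h1

lemma comp_mem_convS (hsemi : ∀ a ∈ S, ∀ b ∈ S, a ∘L b ∈ S)
    {f g : X → X} (hf : f ∈ convS S) (hg : g ∈ convS S) :
    f ∘ g ∈ convS S := by
  have h0 : (fun f : X → X => f ∘ g) '' convS S
      = convexHull ℝ ((fun f : X → X => f ∘ g) '' carrier S) :=
    (rightCompL g).image_convexHull (carrier S)
  have hsub : (fun f : X → X => f ∘ g) '' carrier S ⊆ convS S := by
    rintro _ ⟨_, ⟨R, hR, rfl⟩, rfl⟩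
    exact leftComp_mem_convS hsemi hR hg
  have h1 : f ∘ g ∈ (fun f : X → X => f ∘ g) '' convS S := ⟨f, hf, rfl⟩
  rw [h0] at h1
  exact convexHull_min hsub convex_convS h1

lemma leftComp_mem_Kohler (hsemi : ∀ a ∈ S, ∀ b ∈ S, a ∘L b ∈ S)
    {T : X →L[ℂ] X} (hT : T ∈ S) {g : X → X} (hg : g ∈ KohlerConv S) :
    (T : X → X) ∘ g ∈ KohlerConv S := by
  have h1 : (T : X → X) ∘ g ∈ (fun f : X → X => (T : X → X) ∘ f) '' closure (convS S) :=
    ⟨g, hg, rfl⟩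
  have h2 := image_closure_subset_closure_image (s := convS S) (continuous_leftComp T) h1
  refine closure_mono ?_ h2
  rintro _ ⟨g', hg', rfl⟩
  exact leftComp_mem_convS hsemi hT hg'

lemma comp_mem_Kohler (hsemi : ∀ a ∈ S, ∀ b ∈ S, a ∘L b ∈ S)
    {f g : X → X} (hf : f ∈ KohlerConv S) (hg : g ∈ KohlerConv S) :
    f ∘ g ∈ KohlerConv S := by
  have hstep : (fun f : X → X => f ∘ g) '' convS S ⊆ KohlerConv S := by
    have h0 : (fun f : X → X => f ∘ g) '' convS S
        = convexHull ℝ ((fun f : X → X => f ∘ g) '' carrier S) :=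
      (rightCompL g).image_convexHull (carrier S)
    rw [h0]
    refine convexHull_min ?_ convex_Kohler
    rintro _ ⟨_, ⟨R, hR, rfl⟩, rfl⟩
    exact leftComp_mem_Kohler hsemi hR hg
  have h1 : f ∘ g ∈ (fun f : X → X => f ∘ g) '' closure (convS S) := ⟨f, hf, rfl⟩
  have h2 := image_closure_subset_closure_image (s := convS S) (continuous_rightComp g) h1
  have h3 := closure_mono hstep h2
  rwa [show closure (KohlerConv S) = KohlerConv S from closure_closure] at h3

lemma mem_orbitClosure {f : X → X} (hf : f ∈ KohlerConv S) (x : X) :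
    f x ∈ closure ((fun R : X → X => R x) '' convS S) :=
  image_closure_subset_closure_image (continuous_apply x) ⟨f, hf, rfl⟩

lemma isCompact_Kohler
    (horb : ∀ x : X, IsCompact (closure ((fun R : X → X => R x) '' convS S))) :
    IsCompact (KohlerConv S) := by
  refine IsCompact.of_isClosed_subset (isCompact_univ_pi horb) isClosed_closure ?_
  intro f hf
  rw [Set.mem_univ_pi]
  exact fun x => mem_orbitClosure hf x

/-- The evaluation functions on the semigroup, bundled as bounded continuous functions. -/
lemma exists_bcf
    (horb : ∀ x : X, IsCompact (closure ((fun R : X → X => R x) '' convS S)))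
    (x : X) (ℓ : X →L[ℝ] ℝ) :
    ∃ F : BoundedContinuousFunction (carrier S) ℝ, ∀ s, F s = ℓ ((s : X → X) x) := by
  have hcont : Continuous fun s : carrier S => ℓ ((s : X → X) x) :=
    ℓ.continuous.comp ((continuous_apply x).comp continuous_subtype_val)
  have hK : IsCompact (ℓ '' closure ((fun R : X → X => R x) '' convS S)) :=
    (horb x).image ℓ.continuous
  obtain ⟨r, hr⟩ := hK.isBounded.subset_closedBall 0
  have hb : ∀ s : carrier S, ‖ℓ ((s : X → X) x)‖ ≤ r := by
    intro s
    have h1 : (s : X → X) x ∈ closure ((fun R : X → X => R x) '' convS S) :=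
      subset_closure ⟨(s : X → X), carrier_subset_convS s.2, rfl⟩
    exact mem_closedBall_zero_iff.mp (hr ⟨_, h1, rfl⟩)
  exact ⟨BoundedContinuousFunction.ofNormedAddCommGroup _ hcont r hb, fun s => rfl⟩


/-- For a left amenable operator semigroup `𝒮` on a Hausdorff
locally convex space with relatively compact convex orbits, the kernel of
`K(co 𝒮)` is nonempty and coincides with the set of `Q ∈ K(co 𝒮)` with
`T ∘ Q = Q` for all `T ∈ 𝒮`, and with the set of right zeros of `K(co 𝒮)`. -/
theorem kernel_description (S : Set (X →L[ℂ] X))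
    (hsemi : ∀ a ∈ S, ∀ b ∈ S, a ∘L b ∈ S)
    (hamen : IsLeftAmenableSet (carrier S))
    (horb : ∀ x : X, IsCompact (closure ((fun R : X → X => R x) '' convS S))) :
    (semigroupKernel (KohlerConv S)).Nonempty ∧
    semigroupKernel (KohlerConv S) =
      {Q | Q ∈ KohlerConv S ∧ ∀ T ∈ S, (T : X → X) ∘ Q = Q} ∧
    semigroupKernel (KohlerConv S) = {Q | IsRightZeroIn (KohlerConv S) Q} := by
  classical
  obtain ⟨m, hpos, hone, hinv⟩ := hamen
  choose bcf hbcf using exists_bcf (S := S) horb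
  have hmle : ∀ (F : BoundedContinuousFunction (carrier S) ℝ) (r : ℝ),
      (∀ t, F t ≤ r) → m F ≤ r := by
    intro F r h
    have h0 : (0:ℝ) ≤ m (r • (1 : BoundedContinuousFunction (carrier S) ℝ) - F) := by
      refine hpos _ fun t => ?_
      simp only [BoundedContinuousFunction.sub_apply, BoundedContinuousFunction.smul_apply,
        BoundedContinuousFunction.coe_one, Pi.one_apply, smul_eq_mul, mul_one, sub_nonneg]
      exact h t
    rw [map_sub, map_smul, hone, smul_eq_mul, mul_one, sub_nonneg] at h0
    exact h0
  set t : X × (X →L[ℝ] ℝ) → Set (X → X) :=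
    fun p => {q : X → X | p.2 (q p.1) = m (bcf p.1 p.2)} with ht
  have htcl : ∀ p, IsClosed (t p) := fun p =>
    isClosed_eq (p.2.continuous.comp (continuous_apply p.1)) continuous_const
  have hfin : ∀ u : Finset (X × (X →L[ℝ] ℝ)), (KohlerConv S ∩ ⋂ p ∈ u, t p).Nonempty := by
    intro u
    set Φ : (X → X) →ₗ[ℝ] ({p // p ∈ u} → ℝ) :=
      { toFun := fun q i => (i : X × (X →L[ℝ] ℝ)).2 (q (i : X × (X →L[ℝ] ℝ)).1)
        map_add' := by intro f g; funext i; simp [Pi.add_apply, map_add]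
        map_smul' := by intro r f; funext i; simp [Pi.smul_apply, map_smul] } with hΦ
    have hΦc : Continuous Φ :=
      continuous_pi fun i => (i : X × (X →L[ℝ] ℝ)).2.continuous.comp (continuous_apply _)
    have hDcv : Convex ℝ (Φ '' KohlerConv S) := convex_Kohler.linear_image Φ
    have hDcp : IsCompact (Φ '' KohlerConv S) := (isCompact_Kohler horb).image hΦc
    set c : {p // p ∈ u} → ℝ :=
      fun i => m (bcf (i : X × (X →L[ℝ] ℝ)).1 (i : X × (X →L[ℝ] ℝ)).2) with hc
    have hcD : c ∈ Φ '' KohlerConv S := by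
      by_contra hcD
      obtain ⟨f, r, hfr, hrc⟩ := geometric_hahn_banach_closed_point hDcv hDcp.isClosed hcD
      have hrepr : ∀ v : {p // p ∈ u} → ℝ,
          f v = ∑ i, v i * f (fun j => if i = j then (1:ℝ) else 0) := by
        intro v
        conv_lhs => rw [pi_eq_sum_univ v]
        rw [map_sum]
        refine Finset.sum_congr rfl fun i _ => ?_
        rw [map_smul, smul_eq_mul]
      set F : BoundedContinuousFunction (carrier S) ℝ :=
        ∑ i : {p // p ∈ u},
          f (fun j => if i = j then (1:ℝ) else 0) •
            bcf (i : X × (X →L[ℝ] ℝ)).1 (i : X × (X →L[ℝ] ℝ)).2 with hF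
      have hFs : ∀ s : carrier S, F s = f (Φ (s : X → X)) := by
        intro s
        rw [hrepr (Φ (s : X → X))]
        rw [hF]
        simp only [BoundedContinuousFunction.coe_sum, Finset.sum_apply,
          BoundedContinuousFunction.coe_smul, Pi.smul_apply, smul_eq_mul]
        refine Finset.sum_congr rfl fun i _ => ?_
        rw [hbcf, mul_comm]
        rfl
      have hmF : m F = f c := by
        rw [hF, map_sum, hrepr c]
        refine Finset.sum_congr rfl fun i _ => ?_
        rw [map_smul, smul_eq_mul, mul_comm]
      have hFr : ∀ s : carrier S, F s ≤ r := by
        intro s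
        rw [hFs]
        exact le_of_lt (hfr _ ⟨(s : X → X),
          convS_subset_Kohler (carrier_subset_convS s.2), rfl⟩)
      have h1 := hmle F r hFr
      rw [hmF] at h1
      exact absurd (lt_of_lt_of_le hrc h1) (lt_irrefl r)
    obtain ⟨q, hqG, hqc⟩ := hcD
    refine ⟨q, hqG, ?_⟩
    rw [Set.mem_iInter₂]
    intro p hp
    exact congrFun hqc ⟨p, hp⟩
  obtain ⟨q, hqG, hqt⟩ := (isCompact_Kohler horb).inter_iInter_nonempty t htcl hfin
  rw [Set.mem_iInter] at hqt
  have hqeval : ∀ (x : X) (ℓ : X →L[ℝ] ℝ), ℓ (q x) = m (bcf x ℓ) := fun x ℓ => hqt (x, ℓ)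
  have hfix : ∀ T ∈ S, (T : X → X) ∘ q = q := by
    intro T hT
    funext x
    show (T : X → X) (q x) = q x
    have key : ∀ ℓ : X →L[ℝ] ℝ, ℓ (T (q x)) = ℓ (q x) := by
      intro ℓ
      have h1 : ℓ (T (q x)) = m (bcf x (ℓ.comp (T.restrictScalars ℝ))) :=
        hqeval x (ℓ.comp (T.restrictScalars ℝ))
      have hTA : (T : X → X) ∈ carrier S := ⟨T, hT, rfl⟩
      have h2 : m (bcf x (ℓ.comp (T.restrictScalars ℝ))) = m (bcf x ℓ) := by
        refine hinv ⟨(T : X → X), hTA⟩ (bcf x ℓ) (bcf x (ℓ.comp (T.restrictScalars ℝ))) ?_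
        intro t' h
        rw [hbcf, hbcf]
        rfl
      rw [h1, h2, ← hqeval x ℓ]
    by_contra hne
    obtain ⟨ℓ, hℓ⟩ := SeparatingDual.exists_ne_zero (R := ℝ) (sub_ne_zero.mpr hne)
    rw [map_sub, key ℓ, sub_self] at hℓ
    exact hℓ rfl
  have hext : ∀ Q : X → X, (∀ T ∈ S, (T : X → X) ∘ Q = Q) →
      ∀ R ∈ KohlerConv S, R ∘ Q = Q := by
    intro Q hQ R hR
    funext x
    have hcv : Convex ℝ {f : X → X | f (Q x) = Q x} := by
      intro f hf g hg a b ha hb hab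
      have hf' : f (Q x) = Q x := hf
      have hg' : g (Q x) = Q x := hg
      show (a • f + b • g) (Q x) = Q x
      simp only [Pi.add_apply, Pi.smul_apply, hf', hg', ← add_smul, hab, one_smul]
    have hcl : IsClosed {f : X → X | f (Q x) = Q x} :=
      isClosed_eq (continuous_apply _) continuous_const
    have hsub : carrier S ⊆ {f : X → X | f (Q x) = Q x} := by
      rintro _ ⟨T, hT, rfl⟩
      exact congrFun (hQ T hT) x
    exact closure_minimal (convexHull_min hsub hcv) hcl hR
  have hqZ : IsRightZeroIn (KohlerConv S) q := ⟨hqG, hext q hfix⟩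
  have hZG : {Q | IsRightZeroIn (KohlerConv S) Q} ⊆ KohlerConv S := fun Q hQ => hQ.1
  have hZideal : IsIdealOf (KohlerConv S) {Q | IsRightZeroIn (KohlerConv S) Q} := by
    refine ⟨⟨q, hqZ⟩, hZG, ?_⟩
    intro a ha b hb
    constructor
    · show IsRightZeroIn (KohlerConv S) (a ∘ b)
      rw [hb.2 a ha]
      exact hb
    · refine ⟨comp_mem_Kohler hsemi hb.1 ha, ?_⟩
      intro R hR
      rw [← Function.comp_assoc, hb.2 R hR]
  have hker : semigroupKernel (KohlerConv S) = {Q | IsRightZeroIn (KohlerConv S) Q} := by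
    apply Set.Subset.antisymm
    · exact Set.sInter_subset_of_mem hZideal
    · intro Q hQ
      rw [semigroupKernel, Set.mem_sInter]
      intro I hI
      obtain ⟨⟨b, hb⟩, hIG, hop⟩ := hI
      have h1 := (hop Q hQ.1 b hb).2
      rwa [hQ.2 b (hIG hb)] at h1
  have hset : {Q | Q ∈ KohlerConv S ∧ ∀ T ∈ S, (T : X → X) ∘ Q = Q}
      = {Q | IsRightZeroIn (KohlerConv S) Q} := by
    ext Q
    constructor
    · rintro ⟨hQG, hQ⟩
      exact ⟨hQG, hext Q hQ⟩
    · intro hQ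
      exact ⟨hQ.1, fun T hT =>
        hQ.2 _ (convS_subset_Kohler (carrier_subset_convS ⟨T, hT, rfl⟩))⟩
  exact ⟨⟨q, by rw [hker]; exact hqZ⟩, hker.trans hset.symm, hker⟩


end Stmt16
end
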